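/- arXiv:1810.02946 — 3 statements merged into one kernel-verified Lean document; each statement's English description precedes it below -/
import Mathlib

section
/- (Kummer curve, direction λ₀) Let 0 < λ₀ < λ∞. Define F_0(λ₀,λ∞) = ((λ∞+λ₀)²/2)·log(λ∞+λ₀) + ((λ∞−λ₀)²/2)·log(λ∞−λ₀) − 2λ₀²·log(2λ₀) − (3/2)(λ∞²−λ₀²), F_1(λ₀,λ∞) = −(1/12)·log((λ∞²−λ₀²)/λ₀), and F_g(λ₀,λ∞) = (B_{2g}/(2g(2g−2)))·( (λ₀+λ∞)^{2−2g} + (λ₀−λ∞)^{2−2g} − (2λ₀)^{2−2g} ) for g ≥ 2. Then for every integer n ≥ 1, Σ_{k=1}^{n} (2/(2k)!) · ∂_{λ₀}^{2k} F_{n−k}(λ₀,λ∞) = log((λ∞+λ₀)(λ∞−λ₀)) − 4·log(2λ₀) if n = 1, and = (1/(n−1))·(2λ₀)^{2−2n} if n ≥ 2. (That is, the free energy of the Kummer spectral curve satisfies F(λ₀+ℏ, λ∞) − 2F(λ₀,λ∞) + F(λ₀−ℏ, λ∞) = log((λ∞+λ₀)(λ∞−λ₀)) − 2log(2λ₀)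 − log(2λ₀+ℏ) − log(2λ₀−ℏ) order by order in ℏ, using log(2λ₀+ℏ)+log(2λ₀−ℏ) = 2log(2λ₀) − Σ_{m≥1}(1/m)(ℏ/(2λ₀))^{2m}.) -/
open Finset

private lemma pb_eval (M : ℕ) (t : ℚ) :
    (Polynomial.bernoulli M).eval t
      = ∑ i ∈ range (M + 1), bernoulli i * (M.choose i : ℚ) * t ^ (M - i) := by
  rw [Polynomial.bernoulli, Polynomial.eval_finset_sum]
  simp [Polynomial.eval_monomial]

private lemma QL (M : ℕ) (t : ℚ) :
    (Polynomial.bernoulli (M + 1)).eval t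
      = t * (Polynomial.bernoulli M).eval t
        + ∑ i ∈ range (M + 1), bernoulli (i + 1) * (M.choose i : ℚ) * t ^ (M - i) := by
  rw [pb_eval, pb_eval, Finset.sum_range_succ' (fun k => bernoulli k * ((M+1).choose k : ℚ) * t ^ (M + 1 - k)) (M+1)]
  simp only [bernoulli_zero, Nat.choose_zero_right, Nat.cast_one, one_mul, Nat.sub_zero]
  have h1 : ∀ i ∈ range (M + 1),
      bernoulli (i+1) * (((M+1).choose (i+1) : ℕ) : ℚ) * t ^ (M + 1 - (i+1))
        = bernoulli (i+1) * (M.choose i : ℚ) * t ^ (M - i)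
          + bernoulli (i+1) * (M.choose (i+1) : ℚ) * t ^ (M - i) := by
    intro i hi
    rw [Nat.choose_succ_succ]
    push_cast [Nat.succ_eq_add_one]
    ring
  rw [Finset.sum_congr rfl h1, Finset.sum_add_distrib]
  have h2 : t * ∑ i ∈ range (M + 1), bernoulli i * (M.choose i : ℚ) * t ^ (M - i)
      = t ^ (M + 1) + ∑ i ∈ range M, bernoulli (i+1) * (M.choose (i+1) : ℚ) * t ^ (M - i) := by
    rw [Finset.mul_sum, Finset.sum_range_succ' (fun k => t * (bernoulli k * (M.choose k : ℚ) * t ^ (M - k))) M]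
    simp only [bernoulli_zero, Nat.choose_zero_right, Nat.cast_one, one_mul, Nat.sub_zero]
    rw [add_comm]
    congr 1
    · rw [← pow_succ']
    · refine Finset.sum_congr rfl fun i hi => ?_
      rw [mem_range] at hi
      have : M - i = (M - (i+1)) + 1 := by omega
      rw [this, pow_succ]
      ring
  have h3 : ∑ i ∈ range (M+1), bernoulli (i+1) * (M.choose (i+1) : ℚ) * t ^ (M - i)
      = ∑ i ∈ range M, bernoulli (i+1) * (M.choose (i+1) : ℚ) * t ^ (M - i) := by
    rw [Finset.sum_range_succ]
    simp [Nat.choose_succ_self]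
  rw [h2, h3]; ring

private lemma P_one {M : ℕ} (hM : M ≠ 1) :
    (Polynomial.bernoulli M).eval 1 = bernoulli M := by
  rw [Polynomial.bernoulli_eval_one, bernoulli_eq_bernoulli'_of_ne_one hM]

private lemma P_two {M : ℕ} (hM : M ≠ 1) :
    (Polynomial.bernoulli M).eval 2 = bernoulli M + M := by
  have := Polynomial.bernoulli_eval_one_add M 1
  rw [one_pow, mul_one] at this
  norm_num at this
  rw [this, bernoulli_eq_bernoulli'_of_ne_one hM]

private lemma bern_odd_zero {m : ℕ} (h : Odd m) (h1 : 1 < m) : bernoulli m = 0 := by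
  rw [bernoulli_eq_bernoulli'_of_ne_one (by omega)]
  exact bernoulli'_eq_zero_of_odd h h1

private lemma Wsum (N : ℕ) (t : ℚ) :
    ∑ j ∈ range (N + 2), (j : ℚ) * ((N + 2).choose j : ℚ) * bernoulli j * t ^ (N + 2 - j)
      = (N + 2) * ((Polynomial.bernoulli (N + 2)).eval t
          - t * (Polynomial.bernoulli (N + 1)).eval t - bernoulli (N + 2)) := by
  rw [Finset.sum_range_succ' (fun j => (j : ℚ) * ((N + 2).choose j : ℚ) * bernoulli j * t ^ (N + 2 - j)) (N + 1)]
  simp only [Nat.cast_zero, zero_mul, add_zero]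
  have h1 : ∀ i ∈ range (N + 1),
      ((i + 1 : ℕ) : ℚ) * ((N + 2).choose (i + 1) : ℚ) * bernoulli (i + 1) * t ^ (N + 2 - (i + 1))
        = (N + 2) * (bernoulli (i + 1) * ((N + 1).choose i : ℚ) * t ^ (N + 1 - i)) := by
    intro i hi
    have key : (N + 2) * (N + 1).choose i = (N + 2).choose (i + 1) * (i + 1) :=
      Nat.add_one_mul_choose_eq (N + 1) i
    have keyq : ((N + 2 : ℕ) : ℚ) * ((N + 1).choose i : ℚ)
        = ((N + 2).choose (i + 1) : ℚ) * ((i + 1 : ℕ) : ℚ) := by exact_mod_cast congrArg (Nat.cast (R := ℚ)) key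
    have hsub : N + 2 - (i + 1) = N + 1 - i := by omega
    rw [hsub]
    push_cast at keyq ⊢
    linear_combination (-(bernoulli (i + 1) * t ^ (N + 1 - i))) * keyq
  rw [Finset.sum_congr rfl h1, ← Finset.mul_sum]
  have h2 : ∑ i ∈ range (N + 1), bernoulli (i + 1) * ((N + 1).choose i : ℚ) * t ^ (N + 1 - i)
      = (Polynomial.bernoulli (N + 2)).eval t
          - t * (Polynomial.bernoulli (N + 1)).eval t - bernoulli (N + 2) := by
    have := QL (N + 1) t
    have h4 : ∑ i ∈ range (N + 2), bernoulli (i + 1) * ((N + 1).choose i : ℚ) * t ^ (N + 1 - i)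
        = ∑ i ∈ range (N + 1), bernoulli (i + 1) * ((N + 1).choose i : ℚ) * t ^ (N + 1 - i)
          + bernoulli (N + 2) := by
      rw [Finset.sum_range_succ]; simp
    rw [h4] at this
    linarith
  rw [h2]

private lemma Vval (N : ℕ) (t : ℚ) :
    ∑ j ∈ range (N + 2), ((N + 2).choose j : ℚ) * ((j : ℚ) - 1) * bernoulli j * t ^ (N + 2 - j)
      = (N + 2) * ((Polynomial.bernoulli (N + 2)).eval t
            - t * (Polynomial.bernoulli (N + 1)).eval t - bernoulli (N + 2))
        - ((Polynomial.bernoulli (N + 2)).eval t - bernoulli (N + 2)) := by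
  have hsplit : ∀ j ∈ range (N + 2), ((N + 2).choose j : ℚ) * ((j : ℚ) - 1) * bernoulli j * t ^ (N + 2 - j)
      = (j : ℚ) * ((N + 2).choose j : ℚ) * bernoulli j * t ^ (N + 2 - j)
        - bernoulli j * ((N + 2).choose j : ℚ) * t ^ (N + 2 - j) := by
    intro j _; ring
  rw [Finset.sum_congr rfl hsplit, Finset.sum_sub_distrib, Wsum]
  have hP : (Polynomial.bernoulli (N + 2)).eval t
      = (∑ j ∈ range (N + 2), bernoulli j * ((N + 2).choose j : ℚ) * t ^ (N + 2 - j))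
        + bernoulli (N + 2) := by
    rw [pb_eval, Finset.sum_range_succ]
    simp
  rw [hP]
  ring

private lemma V_one (m : ℕ) (hm : 1 ≤ m) :
    ∑ j ∈ range (2 * m + 2), ((2 * m + 2).choose j : ℚ) * ((j : ℚ) - 1) * bernoulli j = 0 := by
  have h := Vval (2 * m) 1
  simp only [one_pow, mul_one, one_mul] at h
  rw [P_one (by omega), P_one (by omega),
    bern_odd_zero (m := 2 * m + 1) (by exact ⟨m, by ring⟩) (by omega)] at h
  rw [h]
  ring

private lemma V_two (m : ℕ) (hm : 1 ≤ m) :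
    ∑ j ∈ range (2 * m + 2), ((2 * m + 2).choose j : ℚ) * ((j : ℚ) - 1) * bernoulli j * 2 ^ (2 * m + 2 - j)
      = -((2 * m + 2 : ℚ)) * (2 * m + 1) := by
  have h := Vval (2 * m) 2
  rw [P_two (by omega), P_two (by omega),
    bern_odd_zero (m := 2 * m + 1) (by exact ⟨m, by ring⟩) (by omega)] at h
  rw [h]
  push_cast
  ring

private lemma sum_even_odd {β : Type*} [AddCommMonoid β] (f : ℕ → β) (n : ℕ) :
    ∑ j ∈ range (2 * n), f j = ∑ i ∈ range n, (f (2 * i) + f (2 * i + 1)) := by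
  induction n with
  | zero => simp
  | succ n ih =>
    have h : 2 * (n + 1) = 2 * n + 1 + 1 := by ring
    rw [h, Finset.sum_range_succ, Finset.sum_range_succ, ih, Finset.sum_range_succ, add_assoc]

private noncomputable def qq (n k : ℕ) : ℚ :=
  2 * ((2 * n - 3).factorial : ℚ) * bernoulli (2 * (n - k)) * (2 * ((n - k : ℕ) : ℚ) - 1)
    / (((2 * k).factorial : ℚ) * ((2 * (n - k)).factorial : ℚ))

private lemma qq_sum (n : ℕ) (hn : 2 ≤ n) (t : ℚ) :
    ∑ k ∈ Finset.Icc 1 n, t ^ (2 * k) * qq n k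
      = 2 * ((2 * n - 3).factorial : ℚ) / ((2 * n).factorial : ℚ)
        * ∑ j ∈ range (2 * n), ((2 * n).choose j : ℚ) * ((j : ℚ) - 1) * bernoulli j * t ^ (2 * n - j) := by
  rw [Finset.mul_sum, sum_even_odd (fun j => 2 * ((2 * n - 3).factorial : ℚ) / ((2 * n).factorial : ℚ)
    * (((2 * n).choose j : ℚ) * ((j : ℚ) - 1) * bernoulli j * t ^ (2 * n - j))) n]
  have hodd : ∀ i ∈ range n, (2 * ((2 * n - 3).factorial : ℚ) / ((2 * n).factorial : ℚ)
        * (((2 * n).choose (2 * i) : ℚ) * (((2 * i : ℕ) : ℚ) - 1) * bernoulli (2 * i) * t ^ (2 * n - 2 * i))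
      + 2 * ((2 * n - 3).factorial : ℚ) / ((2 * n).factorial : ℚ)
        * (((2 * n).choose (2 * i + 1) : ℚ) * (((2 * i + 1 : ℕ) : ℚ) - 1) * bernoulli (2 * i + 1) * t ^ (2 * n - (2 * i + 1))))
      = 2 * ((2 * n - 3).factorial : ℚ) / ((2 * n).factorial : ℚ)
        * (((2 * n).choose (2 * i) : ℚ) * (((2 * i : ℕ) : ℚ) - 1) * bernoulli (2 * i) * t ^ (2 * n - 2 * i)) := by
    intro i hi
    rcases Nat.eq_zero_or_pos i with h | h
    · subst h; norm_num
    · rw [bern_odd_zero (m := 2 * i + 1) ⟨i, by ring⟩ (by omega)]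
      ring
  rw [Finset.sum_congr rfl hodd]
  refine Finset.sum_bij' (fun k _ => n - k) (fun i _ => n - i) ?_ ?_ ?_ ?_ ?_
  · intro k hk; simp only [Finset.mem_Icc] at hk; simp only [mem_range]; omega
  · intro i hi; simp only [mem_range] at hi; simp only [Finset.mem_Icc]; omega
  · intro k hk; simp only [Finset.mem_Icc] at hk; show n - (n - k) = k; omega
  · intro i hi; simp only [mem_range] at hi; show n - (n - i) = i; omega
  · intro k hk
    simp only [Finset.mem_Icc] at hk
    have hle : 2 * (n - k) ≤ 2 * n := by omega
    have hch : (((2 * n).choose (2 * (n - k)) : ℕ) : ℚ)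
        = ((2 * n).factorial : ℚ) / (((2 * (n - k)).factorial : ℚ) * ((2 * n - 2 * (n - k)).factorial : ℚ)) := by
      rw [Nat.cast_choose ℚ hle]
    have h2 : 2 * n - 2 * (n - k) = 2 * k := by omega
    rw [h2] at hch
    have hfac : ((2 * n).factorial : ℚ) ≠ 0 := by positivity
    have hf1 : (((2 * (n - k)).factorial : ℚ)) ≠ 0 := by positivity
    have hf2 : (((2 * k).factorial : ℚ)) ≠ 0 := by positivity
    rw [qq, hch, h2]
    field_simp
    push_cast
    ring

private lemma qq_sum_one (n : ℕ) (hn : 2 ≤ n) : ∑ k ∈ Finset.Icc 1 n, qq n k = 0 := by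
  have h := qq_sum n hn 1
  simp only [one_pow, one_mul] at h
  obtain ⟨m, rfl⟩ : ∃ m, n = m + 2 := ⟨n - 2, by omega⟩
  have h2n : 2 * (m + 2) = 2 * (m + 1) + 2 := by ring
  rw [h, h2n]
  have hv := V_one (m + 1) (by omega)
  have : ∑ x ∈ range (2 * (m + 1) + 2), ((2 * (m + 1) + 2).choose x : ℚ) * ((x : ℚ) - 1) * bernoulli x * 1
      = ∑ x ∈ range (2 * (m + 1) + 2), ((2 * (m + 1) + 2).choose x : ℚ) * ((x : ℚ) - 1) * bernoulli x := by
    simp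
  rw [this, hv]
  ring

private lemma qq_sum_two (n : ℕ) (hn : 2 ≤ n) :
    ∑ k ∈ Finset.Icc 1 n, 4 ^ k * qq n k = -1 / ((n : ℚ) - 1) := by
  have h := qq_sum n hn 2
  have hp : ∀ k : ℕ, (2 : ℚ) ^ (2 * k) = 4 ^ k := by
    intro k; rw [pow_mul]; norm_num
  simp only [hp] at h
  obtain ⟨m, rfl⟩ : ∃ m, n = m + 2 := ⟨n - 2, by omega⟩
  have h2n : 2 * (m + 2) = 2 * (m + 1) + 2 := by ring
  rw [h, h2n, V_two (m + 1) (by omega)]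
  have h3 : 2 * (m + 1) + 2 - 3 = 2 * m + 1 := by omega
  rw [h3]
  have hfac : ((2 * (m + 1) + 2).factorial : ℚ)
      = (2 * m + 4) * ((2 * m + 3) * ((2 * m + 2) * ((2 * m + 1).factorial : ℚ))) := by
    have e : 2 * (m + 1) + 2 = (2 * m + 3) + 1 := by omega
    rw [e, Nat.factorial_succ, show 2 * m + 3 = (2 * m + 2) + 1 from by omega, Nat.factorial_succ,
      show 2 * m + 2 = (2 * m + 1) + 1 from by omega, Nat.factorial_succ]
    push_cast
    ring
  rw [hfac]
  have hne : ((2 * m + 1).factorial : ℚ) ≠ 0 := by positivity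
  have hm : ((m : ℚ) + 2) - 1 ≠ 0 := by
    have : (0:ℚ) ≤ (m : ℚ) := by positivity
    intro hc; nlinarith
  push_cast
  field_simp
  ring

private lemma eqOn_iteratedDeriv {f : ℝ → ℝ} {D : ℕ → ℝ → ℝ} {s : Set ℝ}
    (hs : IsOpen s) (h0 : Set.EqOn f (D 0) s)
    (hD : ∀ m, ∀ x ∈ s, HasDerivAt (D m) (D (m + 1) x) x) :
    ∀ m, Set.EqOn (iteratedDeriv m f) (D m) s := by
  intro m
  induction m with
  | zero => simpa [iteratedDeriv_zero] using h0
  | succ m ih =>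
    intro x hx
    rw [iteratedDeriv_succ]
    have h1 : iteratedDeriv m f =ᶠ[nhds x] D m :=
      Filter.eventuallyEq_of_mem (hs.mem_nhds hx) ih
    rw [h1.deriv_eq, (hD m x hx).deriv]

private lemma hd_zpow_add (c : ℝ) (e : ℤ) {x : ℝ} (h : x + c ≠ 0) :
    HasDerivAt (fun y : ℝ => (y + c) ^ e) ((e : ℝ) * (x + c) ^ (e - 1)) x := by
  have h2 := (hasDerivAt_zpow e (x + c) (Or.inl h)).comp x ((hasDerivAt_id x).add_const c)
  simpa [Function.comp_def] using h2

private lemma hd_zpow_sub (c : ℝ) (e : ℤ) {x : ℝ} (h : x - c ≠ 0) :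
    HasDerivAt (fun y : ℝ => (y - c) ^ e) ((e : ℝ) * (x - c) ^ (e - 1)) x := by
  have h2 := (hasDerivAt_zpow e (x - c) (Or.inl h)).comp x ((hasDerivAt_id x).sub_const c)
  simpa [Function.comp_def] using h2

private lemma hd_zpow_id (e : ℤ) {x : ℝ} (h : x ≠ 0) :
    HasDerivAt (fun y : ℝ => y ^ e) ((e : ℝ) * x ^ (e - 1)) x := by
  simpa using hasDerivAt_zpow e x (Or.inl h)

private lemma hd_log_cadd (c : ℝ) {x : ℝ} (h : c + x ≠ 0) :
    HasDerivAt (fun y : ℝ => Real.log (c + y)) ((c + x)⁻¹) x := by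
  have h2 := (Real.hasDerivAt_log h).comp x ((hasDerivAt_id x).const_add c)
  simpa [Function.comp_def] using h2

private lemma hd_log_csub (c : ℝ) {x : ℝ} (h : c - x ≠ 0) :
    HasDerivAt (fun y : ℝ => Real.log (c - y)) (-(c - x)⁻¹) x := by
  have h2 := (Real.hasDerivAt_log h).comp x ((hasDerivAt_id x).const_sub c)
  simpa [Function.comp_def] using h2

private lemma hd_log_add (c : ℝ) {x : ℝ} (h : x + c ≠ 0) :
    HasDerivAt (fun y : ℝ => Real.log (y + c)) ((x + c)⁻¹) x := by
  have h2 := (Real.hasDerivAt_log h).comp x ((hasDerivAt_id x).add_const c)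
  simpa [Function.comp_def] using h2

private lemma hd_log_sub (c : ℝ) {x : ℝ} (h : x - c ≠ 0) :
    HasDerivAt (fun y : ℝ => Real.log (y - c)) ((x - c)⁻¹) x := by
  have h2 := (Real.hasDerivAt_log h).comp x ((hasDerivAt_id x).sub_const c)
  simpa [Function.comp_def] using h2

private lemma hd_log_two {x : ℝ} (h : x ≠ 0) :
    HasDerivAt (fun y : ℝ => Real.log (2 * y)) x⁻¹ x := by
  have h2 : (2 : ℝ) * x ≠ 0 := by simp [h]
  have h3 := (Real.hasDerivAt_log h2).comp x ((hasDerivAt_id x).const_mul 2)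
  have h4 : ((2 : ℝ) * x)⁻¹ * 2 = x⁻¹ := by
    field_simp
  simpa [h4, Function.comp_def] using h3

private lemma hd_log_id {x : ℝ} (h : x ≠ 0) :
    HasDerivAt (fun y : ℝ => Real.log y) x⁻¹ x := Real.hasDerivAt_log h

private noncomputable def D0 (li : ℝ) : ℕ → ℝ → ℝ
  | 0 => fun y => (li + y) ^ 2 / 2 * Real.log (li + y) + (li - y) ^ 2 / 2 * Real.log (li - y)
      - 2 * y ^ 2 * Real.log (2 * y) - 3 / 2 * (li ^ 2 - y ^ 2)
  | 1 => fun y => ((li + y) * Real.log (li + y) + (li + y) / 2)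
      - ((li - y) * Real.log (li - y) + (li - y) / 2) - (4 * y * Real.log (2 * y) + 2 * y) + 3 * y
  | 2 => fun y => Real.log (li + y) + Real.log (li - y) - 4 * Real.log (2 * y)
  | (m + 3) => fun y => (-1 : ℝ) ^ m * (m.factorial : ℝ) *
      ((y + li) ^ (-1 - (m : ℤ)) + (y - li) ^ (-1 - (m : ℤ)) - 4 * y ^ (-1 - (m : ℤ)))

private noncomputable def D1 (li : ℝ) : ℕ → ℝ → ℝ
  | 0 => fun y => -(1 / 12) * (Real.log (y + li) + Real.log (y - li) - Real.log y)
  | (m + 1) => fun y => -(1 / 12) * ((-1 : ℝ) ^ m * (m.factorial : ℝ)) *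
      ((y + li) ^ (-1 - (m : ℤ)) + (y - li) ^ (-1 - (m : ℤ)) - y ^ (-1 - (m : ℤ)))

private noncomputable def DP (li c : ℝ) (e : ℤ) (m : ℕ) : ℝ → ℝ :=
  fun y => c * (∏ i ∈ Finset.range m, ((e : ℝ) - (i : ℕ))) *
    ((y + li) ^ (e - (m : ℤ)) + (y - li) ^ (e - (m : ℤ)) - 2 ^ e * y ^ (e - (m : ℤ)))

private lemma DP_step (li c : ℝ) (e : ℤ) (m : ℕ) {x : ℝ} (hx : x ∈ Set.Ioo (0:ℝ) li) :
    HasDerivAt (DP li c e m) (DP li c e (m + 1) x) x := by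
  obtain ⟨hx0, hxl⟩ := hx
  have h1 : x + li ≠ 0 := ne_of_gt (by linarith)
  have h2 : x - li ≠ 0 := sub_ne_zero.mpr (ne_of_lt hxl)
  have h3 : x ≠ 0 := ne_of_gt hx0
  have H := (((hd_zpow_add li (e - (m : ℤ)) h1).add (hd_zpow_sub li (e - (m : ℤ)) h2)).sub
      ((hd_zpow_id (e - (m : ℤ)) h3).const_mul ((2 : ℝ) ^ e))).const_mul
      (c * (∏ i ∈ Finset.range m, ((e : ℝ) - (i : ℕ))))
  have hval : DP li c e (m + 1) x
      = c * (∏ i ∈ Finset.range m, ((e : ℝ) - (i : ℕ))) *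
        ((((e - (m : ℤ)) : ℤ) : ℝ) * (x + li) ^ (e - (m : ℤ) - 1)
          + (((e - (m : ℤ)) : ℤ) : ℝ) * (x - li) ^ (e - (m : ℤ) - 1)
          - (2 : ℝ) ^ e * ((((e - (m : ℤ)) : ℤ) : ℝ) * x ^ (e - (m : ℤ) - 1))) := by
    unfold DP
    rw [Finset.prod_range_succ]
    have he : e - ((m + 1 : ℕ) : ℤ) = e - (m : ℤ) - 1 := by push_cast; ring
    rw [he]
    push_cast
    ring
  rw [hval]
  exact H

private lemma D1_step (li : ℝ) (m : ℕ) {x : ℝ} (hx : x ∈ Set.Ioo (0:ℝ) li) :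
    HasDerivAt (D1 li m) (D1 li (m + 1) x) x := by
  obtain ⟨hx0, hxl⟩ := hx
  have h1 : x + li ≠ 0 := ne_of_gt (by linarith)
  have h2 : x - li ≠ 0 := sub_ne_zero.mpr (ne_of_lt hxl)
  have h3 : x ≠ 0 := ne_of_gt hx0
  match m with
  | 0 =>
    have H := (((hd_log_add li h1).add (hd_log_sub li h2)).sub (hd_log_id h3)).const_mul
      (-(1 / 12) : ℝ)
    have hval : D1 li 1 x = -(1 / 12) * (((x + li)⁻¹ + (x - li)⁻¹) - x⁻¹) := by
      show -(1 / 12) * ((-1 : ℝ) ^ 0 * ((0:ℕ).factorial : ℝ)) *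
          ((x + li) ^ (-1 - (0 : ℤ)) + (x - li) ^ (-1 - (0 : ℤ)) - x ^ (-1 - (0 : ℤ)))
        = -(1 / 12) * (((x + li)⁻¹ + (x - li)⁻¹) - x⁻¹)
      norm_num
    rw [show D1 li (0 + 1) = D1 li 1 from rfl, hval]
    exact H
  | (m + 1) =>
    have H := (((hd_zpow_add li (-1 - (m : ℤ)) h1).add (hd_zpow_sub li (-1 - (m : ℤ)) h2)).sub
        (hd_zpow_id (-1 - (m : ℤ)) h3)).const_mul
        (-(1 / 12) * ((-1 : ℝ) ^ m * (m.factorial : ℝ)))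
    have hval : D1 li (m + 1 + 1) x
        = -(1 / 12) * ((-1 : ℝ) ^ m * (m.factorial : ℝ)) *
          ((((-1 - (m : ℤ)) : ℤ) : ℝ) * (x + li) ^ (-1 - (m : ℤ) - 1)
            + (((-1 - (m : ℤ)) : ℤ) : ℝ) * (x - li) ^ (-1 - (m : ℤ) - 1)
            - (((-1 - (m : ℤ)) : ℤ) : ℝ) * x ^ (-1 - (m : ℤ) - 1)) := by
      show -(1 / 12) * ((-1 : ℝ) ^ (m + 1) * ((m + 1).factorial : ℝ)) *
          ((x + li) ^ (-1 - ((m + 1 : ℕ) : ℤ)) + (x - li) ^ (-1 - ((m + 1 : ℕ) : ℤ))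
            - x ^ (-1 - ((m + 1 : ℕ) : ℤ))) = _
      have he : -1 - ((m + 1 : ℕ) : ℤ) = -1 - (m : ℤ) - 1 := by push_cast; ring
      rw [he, Nat.factorial_succ, pow_succ]
      push_cast
      ring
    rw [hval]
    exact H

private lemma D0_step (li : ℝ) (m : ℕ) {x : ℝ} (hx : x ∈ Set.Ioo (0:ℝ) li) :
    HasDerivAt (D0 li m) (D0 li (m + 1) x) x := by
  obtain ⟨hx0, hxl⟩ := hx
  have h1 : x + li ≠ 0 := ne_of_gt (by linarith)
  have h1' : li + x ≠ 0 := ne_of_gt (by linarith)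
  have h2 : x - li ≠ 0 := sub_ne_zero.mpr (ne_of_lt hxl)
  have h2' : li - x ≠ 0 := sub_ne_zero.mpr (ne_of_gt hxl)
  have h2p : 0 < li - x := by linarith
  have h3 : x ≠ 0 := ne_of_gt hx0
  have hu : HasDerivAt (fun y : ℝ => li + y) 1 x := (hasDerivAt_id x).const_add li
  have hv : HasDerivAt (fun y : ℝ => li - y) (-1) x := (hasDerivAt_id x).const_sub li
  have hlogA : HasDerivAt (fun y : ℝ => Real.log (li + y)) ((li + x)⁻¹) x := hd_log_cadd li h1'
  have hlogB : HasDerivAt (fun y : ℝ => Real.log (li - y)) (-(li - x)⁻¹) x := hd_log_csub li h2'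
  have hlogC : HasDerivAt (fun y : ℝ => Real.log (2 * y)) x⁻¹ x := hd_log_two h3
  match m with
  | 0 =>
    have hu2 : HasDerivAt (fun y : ℝ => (li + y) ^ 2 / 2) (li + x) x := by
      have := (hu.pow 2).div_const 2
      exact this.congr_deriv (by norm_num)
    have hv2 : HasDerivAt (fun y : ℝ => (li - y) ^ 2 / 2) (-(li - x)) x := by
      have := (hv.pow 2).div_const 2
      exact this.congr_deriv (by norm_num; ring)
    have hw2 : HasDerivAt (fun y : ℝ => 2 * y ^ 2) (4 * x) x := by
      have := (hasDerivAt_pow 2 x).const_mul (2 : ℝ)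
      exact this.congr_deriv (by norm_num; ring)
    have hP : HasDerivAt (fun y : ℝ => 3 / 2 * (li ^ 2 - y ^ 2)) (3 / 2 * (0 - 2 * x ^ 1)) x :=
      (((hasDerivAt_const x (li ^ 2)).sub (hasDerivAt_pow 2 x))).const_mul (3 / 2)
    have H := (((hu2.mul hlogA).add (hv2.mul hlogB)).sub (hw2.mul hlogC)).sub hP
    have hval : D0 li 1 x
        = ((li + x) * Real.log (li + x) + (li + x) ^ 2 / 2 * (li + x)⁻¹
            + (-(li - x) * Real.log (li - x) + (li - x) ^ 2 / 2 * -(li - x)⁻¹)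
          - (4 * x * Real.log (2 * x) + 2 * x ^ 2 * x⁻¹)) - 3 / 2 * (0 - 2 * x ^ 1) := by
      show ((li + x) * Real.log (li + x) + (li + x) / 2)
          - ((li - x) * Real.log (li - x) + (li - x) / 2)
          - (4 * x * Real.log (2 * x) + 2 * x) + 3 * x = _
      field_simp
      ring
    rw [show (0 + 1 : ℕ) = 1 from rfl, hval]
    exact H
  | 1 =>
    have hA := hu.mul hlogA
    have hA2 := hu.div_const 2
    have hB := hv.mul hlogB
    have hB2 := hv.div_const 2
    have hC := ((hasDerivAt_id x).const_mul (4 : ℝ)).mul hlogC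
    have hC2 := (hasDerivAt_id x).const_mul (2 : ℝ)
    have hD := (hasDerivAt_id x).const_mul (3 : ℝ)
    have H := (((hA.add hA2).sub (hB.add hB2)).sub (hC.add hC2)).add hD
    have hval : D0 li 2 x
        = ((1 * Real.log (li + x) + (li + x) * (li + x)⁻¹ + 1 / 2)
            - (-1 * Real.log (li - x) + (li - x) * -(li - x)⁻¹ + -1 / 2)
          - (4 * 1 * Real.log (2 * x) + 4 * x * x⁻¹ + 2 * 1)) + 3 * 1 := by
      show Real.log (li + x) + Real.log (li - x) - 4 * Real.log (2 * x) = _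
      field_simp
      ring
    rw [show (1 + 1 : ℕ) = 2 from rfl, hval]
    exact H
  | 2 =>
    have H := ((hlogA.add hlogB).sub (hlogC.const_mul 4))
    have hval : D0 li 3 x = (li + x)⁻¹ + -(li - x)⁻¹ - 4 * x⁻¹ := by
      show (-1 : ℝ) ^ 0 * ((0:ℕ).factorial : ℝ) *
          ((x + li) ^ (-1 - (0 : ℤ)) + (x - li) ^ (-1 - (0 : ℤ)) - 4 * x ^ (-1 - (0 : ℤ))) = _
      norm_num
      field_simp
      ring
    rw [show (2 + 1 : ℕ) = 3 from rfl, hval]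
    exact H
  | (m + 3) =>
    have H := (((hd_zpow_add li (-1 - (m : ℤ)) h1).add (hd_zpow_sub li (-1 - (m : ℤ)) h2)).sub
        ((hd_zpow_id (-1 - (m : ℤ)) h3).const_mul (4 : ℝ))).const_mul
        ((-1 : ℝ) ^ m * (m.factorial : ℝ))
    have hval : D0 li (m + 3 + 1) x
        = (-1 : ℝ) ^ m * (m.factorial : ℝ) *
          ((((-1 - (m : ℤ)) : ℤ) : ℝ) * (x + li) ^ (-1 - (m : ℤ) - 1)
            + (((-1 - (m : ℤ)) : ℤ) : ℝ) * (x - li) ^ (-1 - (m : ℤ) - 1)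
            - 4 * ((((-1 - (m : ℤ)) : ℤ) : ℝ) * x ^ (-1 - (m : ℤ) - 1))) := by
      show (-1 : ℝ) ^ (m + 1) * ((m + 1).factorial : ℝ) *
          ((x + li) ^ (-1 - ((m + 1 : ℕ) : ℤ)) + (x - li) ^ (-1 - ((m + 1 : ℕ) : ℤ))
            - 4 * x ^ (-1 - ((m + 1 : ℕ) : ℤ))) = _
      have he : -1 - ((m + 1 : ℕ) : ℤ) = -1 - (m : ℤ) - 1 := by push_cast; ring
      rw [he, Nat.factorial_succ, pow_succ]
      push_cast
      ring
    rw [hval]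
    exact H

private lemma D0_val (li : ℝ) (m : ℕ) (x : ℝ) :
    D0 li (m + 3) x = (-1 : ℝ) ^ m * (m.factorial : ℝ) *
      ((x + li) ^ (-1 - (m : ℤ)) + (x - li) ^ (-1 - (m : ℤ)) - 4 * x ^ (-1 - (m : ℤ))) := rfl

private lemma D1_val (li : ℝ) (m : ℕ) (x : ℝ) :
    D1 li (m + 1) x = -(1 / 12) * ((-1 : ℝ) ^ m * (m.factorial : ℝ)) *
      ((x + li) ^ (-1 - (m : ℤ)) + (x - li) ^ (-1 - (m : ℤ)) - x ^ (-1 - (m : ℤ))) := rfl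

private lemma prod_desc (j m : ℕ) :
    (∏ i ∈ Finset.range m, (-(j : ℝ) - 1 - (i : ℕ))) * (j.factorial : ℝ)
      = (-1 : ℝ) ^ m * ((j + m).factorial : ℝ) := by
  induction m with
  | zero => simp
  | succ m ih =>
    rw [Finset.prod_range_succ, show j + (m + 1) = (j + m) + 1 from by omega,
      Nat.factorial_succ, pow_succ]
    push_cast at ih ⊢
    linear_combination (-(j : ℝ) - 1 - (m : ℝ)) * ih

private lemma four_pow (k : ℕ) : (4 : ℝ) ^ k = (2 : ℝ) ^ ((2 * k : ℕ) : ℤ) := by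
  rw [zpow_natCast, pow_mul]; norm_num

private lemma fac2g (g : ℕ) (hg : 2 ≤ g) :
    ((2 * g).factorial : ℝ)
      = (2 * (g : ℝ)) * (2 * (g : ℝ) - 1) * (2 * (g : ℝ) - 2) * ((2 * g - 3).factorial : ℝ) := by
  obtain ⟨h, rfl⟩ : ∃ h, g = h + 2 := ⟨g - 2, by omega⟩
  rw [show 2 * (h + 2) = (2 * h + 3) + 1 from by omega]
  rw [show (2 * h + 3) + 1 - 3 = 2 * h + 1 from by omega]
  rw [Nat.factorial_succ, show 2 * h + 3 = (2 * h + 2) + 1 from by omega, Nat.factorial_succ,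
    show 2 * h + 2 = (2 * h + 1) + 1 from by omega, Nat.factorial_succ]
  push_cast
  ring

private lemma key_g0 (n : ℕ) (hn : 2 ≤ n) (l0 li : ℝ) :
    2 / ((2 * n).factorial : ℝ) * D0 li (2 * n) l0
      = ((qq n n : ℚ) : ℝ) * ((l0 + li) ^ (2 - 2 * (n : ℤ)) + (l0 - li) ^ (2 - 2 * (n : ℤ)))
        - ((qq n n : ℚ) : ℝ) * 4 ^ n * (2 * l0) ^ (2 - 2 * (n : ℤ)) := by
  obtain ⟨m, hm⟩ : ∃ m, 2 * n = m + 3 := ⟨2 * n - 3, by omega⟩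
  rw [hm, D0_val]
  have hodd : (-1 : ℝ) ^ m = -1 := Odd.neg_one_pow ⟨n - 2, by omega⟩
  have hexp : (-1 : ℤ) - (m : ℤ) = 2 - 2 * (n : ℤ) := by omega
  rw [hodd, hexp]
  have hqq : (qq n n : ℚ) = -2 * (m.factorial : ℚ) / (((m + 3).factorial : ℚ)) := by
    simp only [qq, Nat.sub_self, show 2 * n - 3 = m from by omega, hm]
    norm_num
  have hqqR : ((qq n n : ℚ) : ℝ) = -2 * (m.factorial : ℝ) / (((m + 3).factorial : ℝ)) := by
    rw [hqq]; push_cast; ring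
  rw [hqqR, mul_zpow]
  have h42 : (4 : ℝ) ^ n * (2 : ℝ) ^ (2 - 2 * (n : ℤ)) = 4 := by
    rw [four_pow, ← zpow_add₀ (two_ne_zero : (2:ℝ) ≠ 0),
      show ((2 * n : ℕ) : ℤ) + (2 - 2 * (n : ℤ)) = 2 from by omega]
    norm_num
  have hfne : (((m + 3).factorial : ℝ)) ≠ 0 := by positivity
  field_simp
  linear_combination (-(l0 ^ (2 - 2 * (n : ℤ)))) * h42

private lemma key_g1 (n : ℕ) (hn : 2 ≤ n) (l0 li : ℝ) :
    2 / ((2 * (n - 1)).factorial : ℝ) * D1 li (2 * (n - 1)) l0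
      = ((qq n (n - 1) : ℚ) : ℝ) * ((l0 + li) ^ (2 - 2 * (n : ℤ)) + (l0 - li) ^ (2 - 2 * (n : ℤ)))
        - ((qq n (n - 1) : ℚ) : ℝ) * 4 ^ (n - 1) * (2 * l0) ^ (2 - 2 * (n : ℤ)) := by
  obtain ⟨m, hm⟩ : ∃ m, 2 * (n - 1) = m + 1 := ⟨2 * n - 3, by omega⟩
  rw [hm, D1_val]
  have hodd : (-1 : ℝ) ^ m = -1 := Odd.neg_one_pow ⟨n - 2, by omega⟩
  have hexp : (-1 : ℤ) - (m : ℤ) = 2 - 2 * (n : ℤ) := by omega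
  rw [hodd, hexp]
  have hb2 : bernoulli 2 = 1 / 6 := by
    rw [bernoulli_eq_bernoulli'_of_ne_one (by norm_num), bernoulli'_two]
  have hqq : (qq n (n - 1) : ℚ) = (m.factorial : ℚ) / (6 * ((m + 1).factorial : ℚ)) := by
    simp only [qq, show n - (n - 1) = 1 from by omega, show 2 * n - 3 = m from by omega, hm]
    rw [show (2 : ℕ) * 1 = 2 from rfl, hb2]
    norm_num
    ring
  have hqqR : ((qq n (n - 1) : ℚ) : ℝ) = (m.factorial : ℝ) / (6 * ((m + 1).factorial : ℝ)) := by
    rw [hqq]; push_cast; ring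
  rw [hqqR, mul_zpow]
  have h42 : (4 : ℝ) ^ (n - 1) * (2 : ℝ) ^ (2 - 2 * (n : ℤ)) = 1 := by
    rw [four_pow, ← zpow_add₀ (two_ne_zero : (2:ℝ) ≠ 0),
      show ((2 * (n - 1) : ℕ) : ℤ) + (2 - 2 * (n : ℤ)) = 0 from by rw [hm]; omega]
    norm_num
  have hfne : (((m + 1).factorial : ℝ)) ≠ 0 := by positivity
  field_simp
  linear_combination (12 * l0 ^ (2 - 2 * (n : ℤ))) * h42

private lemma key_gg (n k g : ℕ) (hg : 2 ≤ g) (hk : 1 ≤ k) (hkg : k + g = n) (l0 li : ℝ) :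
    2 / ((2 * k).factorial : ℝ)
        * DP li ((bernoulli (2 * g) : ℝ) / (2 * (g : ℝ) * (2 * (g : ℝ) - 2))) (2 - 2 * (g : ℤ))
            (2 * k) l0
      = ((qq n k : ℚ) : ℝ) * ((l0 + li) ^ (2 - 2 * (n : ℤ)) + (l0 - li) ^ (2 - 2 * (n : ℤ)))
        - ((qq n k : ℚ) : ℝ) * 4 ^ k * (2 * l0) ^ (2 - 2 * (n : ℤ)) := by
  unfold DP
  have hexp : (2 - 2 * (g : ℤ)) - ((2 * k : ℕ) : ℤ) = 2 - 2 * (n : ℤ) := by omega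
  rw [hexp]
  set j : ℕ := 2 * g - 3 with hj
  have hjR : (j : ℝ) = 2 * (g : ℝ) - 3 := by
    rw [hj, Nat.cast_sub (by omega : 3 ≤ 2 * g)]
    push_cast; ring
  have hpc : ∀ i ∈ Finset.range (2 * k),
      (((2 - 2 * (g : ℤ)) : ℤ) : ℝ) - (i : ℕ) = -(j : ℝ) - 1 - (i : ℕ) := by
    intro i _
    rw [hjR]; push_cast; ring
  rw [Finset.prod_congr rfl hpc]
  have hprod := prod_desc j (2 * k)
  have hjfne : ((j.factorial : ℕ) : ℝ) ≠ 0 := by positivity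
  have hP : (∏ i ∈ Finset.range (2 * k), (-(j : ℝ) - 1 - (i : ℕ)))
      = ((j + 2 * k).factorial : ℝ) / (j.factorial : ℝ) := by
    rw [eq_div_iff hjfne, hprod, pow_mul]
    norm_num
  rw [hP, show j + 2 * k = 2 * n - 3 from by omega]
  have hqq : (qq n k : ℚ)
      = 2 * ((2 * n - 3).factorial : ℚ) * bernoulli (2 * g) * (2 * (g : ℚ) - 1)
        / (((2 * k).factorial : ℚ) * ((2 * g).factorial : ℚ)) := by
    simp only [qq, show n - k = g from by omega]
  have hqqR : ((qq n k : ℚ) : ℝ)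
      = 2 * ((2 * n - 3).factorial : ℝ) * ((bernoulli (2 * g) : ℚ) : ℝ) * (2 * (g : ℝ) - 1)
        / (((2 * k).factorial : ℝ) * ((2 * g).factorial : ℝ)) := by
    rw [hqq]; push_cast; ring
  rw [hqqR, mul_zpow]
  have h42g : (4 : ℝ) ^ k * (2 : ℝ) ^ (2 - 2 * (n : ℤ)) = (2 : ℝ) ^ (2 - 2 * (g : ℤ)) := by
    rw [four_pow, ← zpow_add₀ (two_ne_zero : (2:ℝ) ≠ 0),
      show ((2 * k : ℕ) : ℤ) + (2 - 2 * (n : ℤ)) = 2 - 2 * (g : ℤ) from by omega]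
  rw [← h42g]
  have hfacg := fac2g g hg
  rw [show ((2 * g - 3).factorial : ℝ) = (j.factorial : ℝ) from by rw [hj]] at hfacg
  rw [hfacg]
  have h1 : ((2 * k).factorial : ℝ) ≠ 0 := by positivity
  have h2 : ((2 * n - 3).factorial : ℝ) ≠ 0 := by positivity
  have h3 : (2 * (g : ℝ)) ≠ 0 := by
    have : (2 : ℝ) ≤ (g : ℝ) := by exact_mod_cast hg
    nlinarith
  have h4 : (2 * (g : ℝ) - 1) ≠ 0 := by
    have : (2 : ℝ) ≤ (g : ℝ) := by exact_mod_cast hg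
    nlinarith
  have h5 : (2 * (g : ℝ) - 2) ≠ 0 := by
    have : (2 : ℝ) ≤ (g : ℝ) := by exact_mod_cast hg
    nlinarith
  field_simp

/-- (Kummer curve, direction λ₀) The free energy of the Kummer spectral curve
satisfies `F(λ₀+ℏ, λ∞) − 2F(λ₀,λ∞) + F(λ₀−ℏ, λ∞)
  = log((λ∞+λ₀)(λ∞−λ₀)) − 2log(2λ₀) − log(2λ₀+ℏ) − log(2λ₀−ℏ)`
order by order in `ℏ`. -/
theorem stmt15 (F : ℕ → ℝ → ℝ → ℝ)
    (hF0 : ∀ l0 li : ℝ, 0 < l0 → l0 < li →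
      F 0 l0 li = (li + l0) ^ 2 / 2 * Real.log (li + l0)
        + (li - l0) ^ 2 / 2 * Real.log (li - l0)
        - 2 * l0 ^ 2 * Real.log (2 * l0) - 3 / 2 * (li ^ 2 - l0 ^ 2))
    (hF1 : ∀ l0 li : ℝ, 0 < l0 → l0 < li →
      F 1 l0 li = -(1 / 12) * Real.log ((li ^ 2 - l0 ^ 2) / l0))
    (hFg : ∀ g : ℕ, 2 ≤ g → ∀ l0 li : ℝ, 0 < l0 → l0 < li →
      F g l0 li = (bernoulli (2 * g) : ℝ) / (2 * (g : ℝ) * (2 * (g : ℝ) - 2))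
        * ((l0 + li) ^ (2 - 2 * (g : ℤ)) + (l0 - li) ^ (2 - 2 * (g : ℤ))
            - (2 * l0) ^ (2 - 2 * (g : ℤ))))
    (n : ℕ) (hn : 1 ≤ n) (l0 li : ℝ) (h0 : 0 < l0) (h1 : l0 < li) :
    ∑ k ∈ Finset.Icc 1 n,
        2 / (Nat.factorial (2 * k) : ℝ)
          * iteratedDeriv (2 * k) (fun y => F (n - k) y li) l0
      = if n = 1 then Real.log ((li + l0) * (li - l0)) - 4 * Real.log (2 * l0)
        else 1 / ((n : ℝ) - 1) * (2 * l0) ^ (2 - 2 * (n : ℤ)) := by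
  have hli : 0 < li := lt_trans h0 h1
  have hs : IsOpen (Set.Ioo (0:ℝ) li) := isOpen_Ioo
  have hl0 : l0 ∈ Set.Ioo (0:ℝ) li := ⟨h0, h1⟩
  have hD0 : ∀ m, iteratedDeriv m (fun y => F 0 y li) l0 = D0 li m l0 := fun m =>
    eqOn_iteratedDeriv hs (fun y hy => hF0 y li hy.1 hy.2)
      (fun m x hx => D0_step li m hx) m hl0
  have hD1 : ∀ m, iteratedDeriv m (fun y => F 1 y li) l0 = D1 li m l0 := by
    intro m
    refine eqOn_iteratedDeriv hs ?_ (fun m x hx => D1_step li m hx) m hl0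
    intro y hy
    obtain ⟨hy0, hyl⟩ := hy
    have hyli : y + li ≠ 0 := ne_of_gt (by linarith)
    have hliy : li - y ≠ 0 := ne_of_gt (by linarith)
    have hy0' : y ≠ 0 := ne_of_gt hy0
    show F 1 y li = -(1 / 12) * (Real.log (y + li) + Real.log (y - li) - Real.log y)
    rw [hF1 y li hy0 hyl]
    have e1 : li ^ 2 - y ^ 2 = (y + li) * (li - y) := by ring
    rw [e1, Real.log_div (mul_ne_zero hyli hliy) hy0', Real.log_mul hyli hliy,
      show Real.log (li - y) = Real.log (y - li) from by
        rw [← Real.log_neg_eq_log (y - li), neg_sub]]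
  have hDg : ∀ g, 2 ≤ g → ∀ m, iteratedDeriv m (fun y => F g y li) l0
      = DP li ((bernoulli (2 * g) : ℝ) / (2 * (g : ℝ) * (2 * (g : ℝ) - 2)))
          (2 - 2 * (g : ℤ)) m l0 := by
    intro g hg m
    refine eqOn_iteratedDeriv hs ?_ (fun m x hx => DP_step li _ _ m hx) m hl0
    intro y hy
    show F g y li = _
    rw [hFg g hg y li hy.1 hy.2]
    simp only [DP, Finset.range_zero, Finset.prod_empty, mul_one, Nat.cast_zero, sub_zero,
      CharP.cast_eq_zero]
    rw [mul_zpow]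
  by_cases hne : n = 1
  · subst hne
    rw [if_pos rfl, show Finset.Icc 1 1 = {1} from Finset.Icc_self 1, Finset.sum_singleton,
      show (1 - 1 : ℕ) = 0 from rfl, show (2 * 1 : ℕ) = 2 from rfl, hD0 2,
      show D0 li 2 l0 = Real.log (li + l0) + Real.log (li - l0) - 4 * Real.log (2 * l0) from rfl,
      Real.log_mul (ne_of_gt (show (0:ℝ) < li + l0 by linarith))
        (ne_of_gt (show (0:ℝ) < li - l0 by linarith)),
      show ((Nat.factorial 2 : ℕ) : ℝ) = 2 from by norm_num [Nat.factorial]]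
    ring
  · rw [if_neg hne]
    have hn2 : 2 ≤ n := by omega
    have key : ∀ k ∈ Finset.Icc 1 n,
        2 / ((2 * k).factorial : ℝ) * iteratedDeriv (2 * k) (fun y => F (n - k) y li) l0
          = ((qq n k : ℚ) : ℝ) * ((l0 + li) ^ (2 - 2 * (n : ℤ)) + (l0 - li) ^ (2 - 2 * (n : ℤ)))
            - ((qq n k : ℚ) : ℝ) * 4 ^ k * (2 * l0) ^ (2 - 2 * (n : ℤ)) := by
      intro k hk
      rw [Finset.mem_Icc] at hk
      by_cases hkn : k = n
      · rw [hkn, Nat.sub_self, hD0 (2 * n)]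
        exact key_g0 n hn2 l0 li
      by_cases hkn1 : k = n - 1
      · rw [hkn1, show n - (n - 1) = 1 from by omega, hD1 (2 * (n - 1))]
        exact key_g1 n hn2 l0 li
      · have hg : 2 ≤ n - k := by omega
        rw [hDg (n - k) hg (2 * k)]
        exact key_gg n k (n - k) hg hk.1 (by omega) l0 li
    rw [Finset.sum_congr rfl key, Finset.sum_sub_distrib, ← Finset.sum_mul]
    have e2 : ∑ k ∈ Finset.Icc 1 n, ((qq n k : ℚ) : ℝ) * 4 ^ k * (2 * l0) ^ (2 - 2 * (n : ℤ))
        = (∑ k ∈ Finset.Icc 1 n, ((qq n k : ℚ) : ℝ) * 4 ^ k) * (2 * l0) ^ (2 - 2 * (n : ℤ)) :=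
      (Finset.sum_mul _ _ _).symm
    rw [e2]
    have s1 : (∑ k ∈ Finset.Icc 1 n, ((qq n k : ℚ) : ℝ)) = 0 := by
      have h := qq_sum_one n hn2
      have h2 : ((∑ k ∈ Finset.Icc 1 n, qq n k : ℚ) : ℝ) = 0 := by rw [h]; norm_num
      rw [← h2]
      push_cast
      ring
    have s2 : (∑ k ∈ Finset.Icc 1 n, ((qq n k : ℚ) : ℝ) * 4 ^ k) = -1 / ((n : ℝ) - 1) := by
      have h := qq_sum_two n hn2
      have h2 : ((∑ k ∈ Finset.Icc 1 n, 4 ^ k * qq n k : ℚ) : ℝ) = -1 / ((n : ℝ) - 1) := by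
        rw [h]; push_cast; ring
      rw [← h2]
      push_cast
      exact Finset.sum_congr rfl fun k _ => by ring
    rw [s1, s2]
    ring
end

section
/- Let λ₀, λ₁, λ∞ ∈ ℝ satisfy λ₀ + ελ₁ + ηλ∞ > 0 for all ε, η ∈ {+1,−1} (and λ₀,λ₁,λ∞ > 0). Set Λ = Π_{ε,η∈{±1}} (λ₀ + ελ₁ + ηλ∞). Define G_0 = Σ_{ε,η∈{±1}} ((λ₀+ελ₁+ηλ∞)²/2)·log(λ₀+ελ₁+ηλ∞) − 3(λ₀²+λ₁²+λ∞²), G_1 = −(1/12)·log Λ, and G_g = (B_{2g}/(2g(2g−2)))·Σ_{ε,η∈{±1}} (λ₀+ελ₁+ηλ∞)^{2−2g} for g ≥ 2. Then for each j ∈ {0,1,∞} and every integer n ≥ 1, Σ_{k=1}^{n} (2/(2k)!) · ∂_{λ_j}^{2k} G_{n−k} = log Λ if n = 1, and = 0 if n ≥ 2. (That is, the formal series G = Σ_{g≥0} ℏ^{2g−2} G_g satisfies X_j G = log Λ for each j, where X_j is the second difference operator in the variable λ_j.) -/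
open Finset



lemma my_sum_range_two_mul (n : ℕ) (f : ℕ → ℚ) :
    ∑ k ∈ range (2*n), f k = ∑ g ∈ range n, (f (2*g) + f (2*g+1)) := by
  induction n with
  | zero => simp
  | succ n ih =>
    have : 2*(n+1) = (2*n)+1+1 := by ring
    rw [this, sum_range_succ, sum_range_succ, ih, sum_range_succ]
    ring

lemma bern_odd (m : ℕ) (h : Odd m) (h1 : 1 < m) : bernoulli m = 0 := by
  rw [bernoulli_eq_bernoulli'_of_ne_one (by omega)]
  exact bernoulli'_eq_zero_of_odd h h1

lemma bern_id (n : ℕ) (hn : 2 ≤ n) :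
    ∑ g ∈ range n, (2*(g:ℚ) - 1) * ((2*n).choose (2*g) : ℚ) * bernoulli (2*g) = 0 := by
  obtain ⟨m, hm⟩ : ∃ m, 2*n = m+1 := ⟨2*n-1, by omega⟩
  have hA : ∑ k ∈ range (2*n), ((2*n).choose k : ℚ) * bernoulli k = 0 := by
    rw [sum_bernoulli, if_neg (by omega)]
  have hB : ∑ k ∈ range (2*n), ((2*n:ℚ) - k) * ((2*n).choose k : ℚ) * bernoulli k = 0 := by
    rw [hm, show (2*(n:ℚ)) = (m:ℚ)+1 by exact_mod_cast hm]
    have e1 : ∀ k ∈ range (m+1), (((m+1):ℚ) - k) * ((m+1).choose k : ℚ) * bernoulli k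
        = ((m+1):ℚ) * ((m.choose k : ℚ) * bernoulli k) := by
      intro k hk
      rw [mem_range] at hk
      have hnat := Nat.choose_mul_succ_eq m k
      have hq : (m.choose k : ℚ) * (m+1) = ((m+1).choose k : ℚ) * (((m+1):ℚ) - k) := by
        have := congrArg (fun x : ℕ => (x : ℚ)) hnat
        push_cast [Nat.cast_sub (by omega : k ≤ m+1)] at this
        linarith [this]
      linear_combination (-bernoulli k) * hq
    rw [sum_congr rfl e1, ← mul_sum]
    have : ∑ k ∈ range (m+1), (m.choose k : ℚ) * bernoulli k = 0 := by
      rw [sum_range_succ, Nat.choose_self, sum_bernoulli, if_neg (by omega),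
        bern_odd m (by rw [show m = 2*(n-1)+1 by omega]; exact odd_two_mul_add_one _) (by omega)]
      norm_num
    rw [this, mul_zero]
  have hC : ∑ k ∈ range (2*n), ((k:ℚ) - 1) * ((2*n).choose k : ℚ) * bernoulli k = 0 := by
    have : ∀ k ∈ range (2*n), ((k:ℚ) - 1) * ((2*n).choose k : ℚ) * bernoulli k
        = ((2*n:ℚ) - 1) * (((2*n).choose k : ℚ) * bernoulli k)
          - ((2*n:ℚ) - k) * ((2*n).choose k : ℚ) * bernoulli k := by
      intro k _; ring
    rw [sum_congr rfl this, sum_sub_distrib, hB, ← mul_sum, hA]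
    ring
  rw [my_sum_range_two_mul] at hC
  have : ∀ g ∈ range n,
      (((2*g:ℕ):ℚ) - 1) * ((2*n).choose (2*g) : ℚ) * bernoulli (2*g)
        + (((2*g+1:ℕ):ℚ) - 1) * ((2*n).choose (2*g+1) : ℚ) * bernoulli (2*g+1)
      = (2*(g:ℚ) - 1) * ((2*n).choose (2*g) : ℚ) * bernoulli (2*g) := by
    intro g _
    rcases Nat.eq_zero_or_pos g with hg | hg
    · subst hg; norm_num
    · rw [bern_odd _ (odd_two_mul_add_one g) (by omega)]
      push_cast
      ring
  rw [sum_congr rfl this] at hC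
  exact hC


noncomputable def Phi : ℕ → ℕ → ℝ → ℝ
  | 0, 0, u => u ^ 2 / 2 * Real.log u
  | 0, 1, u => u * Real.log u + u / 2
  | 0, 2, u => Real.log u + 3 / 2
  | 0, (m+3), u => (-1) ^ m * (Nat.factorial m : ℝ) * u ^ (-(m:ℤ) - 1)
  | 1, 0, u => -(1/12) * Real.log u
  | 1, (m+1), u => -(1/12) * ((-1) ^ m * (Nat.factorial m : ℝ) * u ^ (-(m:ℤ) - 1))
  | (g+2), m, u => (bernoulli (2*(g+2)) : ℝ) / (2*((g:ℝ)+2)*(2*((g:ℝ)+2)-2))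
      * ((∏ i ∈ range m, ((2:ℝ) - 2*((g:ℝ)+2) - i)) * u ^ (2 - 2*((g:ℤ)+2) - m))

lemma Phi_hasDeriv (g m : ℕ) {u : ℝ} (hu : 0 < u) :
    HasDerivAt (Phi g m) (Phi g (m+1) u) u := by
  have hu' := hu.ne'
  match g, m with
  | 0, 0 =>
    have h := (((hasDerivAt_pow 2 u).div_const 2).mul (Real.hasDerivAt_log hu'))
    refine h.congr_deriv ?_
    symm
    simp [Phi]
    field_simp
  | 0, 1 =>
    have h := (((hasDerivAt_id u).mul (Real.hasDerivAt_log hu')).add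
      ((hasDerivAt_id u).div_const 2))
    refine h.congr_deriv ?_
    symm
    simp [Phi]
    field_simp
    ring
  | 0, 2 =>
    have h := (Real.hasDerivAt_log hu').add_const (3/2 : ℝ)
    refine h.congr_deriv ?_
    symm
    simp [Phi]
  | 0, (m+3) =>
    have h := (hasDerivAt_zpow (-(m:ℤ) - 1) u (Or.inl hu')).const_mul
      ((-1:ℝ) ^ m * (Nat.factorial m : ℝ))
    refine h.congr_deriv ?_
    symm
    show (-1:ℝ) ^ (m+1) * (Nat.factorial (m+1) : ℝ) * u ^ (-((m:ℤ)+1) - 1) = _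
    rw [Nat.factorial_succ]
    push_cast
    rw [show (-((m:ℤ)+1) - 1) = (-(m:ℤ) -1) - 1 by ring]
    ring
  | 1, 0 =>
    have h := (Real.hasDerivAt_log hu').const_mul (-(1/12) : ℝ)
    refine h.congr_deriv ?_
    symm
    show -(1/12) * ((-1:ℝ) ^ 0 * (Nat.factorial 0 : ℝ) * u ^ (-(0:ℤ) - 1)) = _
    simp [zpow_neg_one]
  | 1, (m+1) =>
    have h := ((hasDerivAt_zpow (-(m:ℤ) - 1) u (Or.inl hu')).const_mul
      ((-1:ℝ) ^ m * (Nat.factorial m : ℝ))).const_mul (-(1/12) : ℝ)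
    refine h.congr_deriv ?_
    symm
    show -(1/12) * ((-1:ℝ) ^ (m+1) * (Nat.factorial (m+1) : ℝ) * u ^ (-((m:ℤ)+1) - 1)) = _
    rw [Nat.factorial_succ]
    push_cast
    rw [show (-((m:ℤ)+1) - 1) = (-(m:ℤ) -1) - 1 by ring]
    ring
  | (g+2), m =>
    have h := ((hasDerivAt_zpow (2 - 2*((g:ℤ)+2) - m) u (Or.inl hu')).const_mul
      (∏ i ∈ range m, ((2:ℝ) - 2*((g:ℝ)+2) - i))).const_mul
      ((bernoulli (2*(g+2)) : ℝ) / (2*((g:ℝ)+2)*(2*((g:ℝ)+2)-2)))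
    refine h.congr_deriv ?_
    symm
    show (bernoulli (2*(g+2)) : ℝ) / (2*((g:ℝ)+2)*(2*((g:ℝ)+2)-2))
      * ((∏ i ∈ range (m+1), ((2:ℝ) - 2*((g:ℝ)+2) - i)) * u ^ (2 - 2*((g:ℤ)+2) - (m+1:ℕ))) = _
    rw [prod_range_succ]
    push_cast
    rw [show (2 - 2*((g:ℤ)+2) - ((m:ℤ)+1)) = (2 - 2*((g:ℤ)+2) - m) - 1 by ring]
    ring


lemma Phi_zero_zero (u : ℝ) : Phi 0 0 u = u ^ 2 / 2 * Real.log u := rfl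
lemma Phi_zero_two (u : ℝ) : Phi 0 2 u = Real.log u + 3/2 := rfl
lemma Phi_one_zero (u : ℝ) : Phi 1 0 u = -(1/12) * Real.log u := rfl
lemma Phi_zero_succ3 (m : ℕ) (u : ℝ) :
    Phi 0 (m+3) u = (-1) ^ m * (Nat.factorial m : ℝ) * u ^ (-(m:ℤ) - 1) := rfl
lemma Phi_one_succ (m : ℕ) (u : ℝ) :
    Phi 1 (m+1) u = -(1/12) * ((-1) ^ m * (Nat.factorial m : ℝ) * u ^ (-(m:ℤ) - 1)) := rfl
lemma Phi_g2 (g m : ℕ) (u : ℝ) : Phi (g+2) m u = (bernoulli (2*(g+2)) : ℝ) / (2*((g:ℝ)+2)*(2*((g:ℝ)+2)-2))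
      * ((∏ i ∈ range m, ((2:ℝ) - 2*((g:ℝ)+2) - i)) * u ^ (2 - 2*((g:ℤ)+2) - m)) := rfl

lemma logsum (u1 u2 u3 u4 : ℝ) (p1 : 0<u1) (p2 : 0<u2) (p3 : 0<u3) (p4 : 0<u4) :
    Real.log (u1*u2*u3*u4) = Real.log u1 + Real.log u2 + Real.log u3 + Real.log u4 := by
  rw [Real.log_mul (by positivity) p4.ne', Real.log_mul (by positivity) p3.ne',
    Real.log_mul p1.ne' p2.ne']


lemma choose_cast_eq (N K : ℕ) (h : K ≤ N) :
    ((N.choose K : ℕ) : ℝ)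
      = (N.factorial : ℝ) / ((K.factorial : ℝ) * ((N-K).factorial : ℝ)) := by
  have h2 : ((N.choose K * K.factorial * (N-K).factorial : ℕ) : ℝ) = (N.factorial : ℝ) := by
    exact_mod_cast congrArg (fun x : ℕ => (x:ℝ)) (Nat.choose_mul_factorial_mul_factorial h)
  push_cast at h2
  rw [eq_div_iff (by positivity)]
  linear_combination h2

lemma prod_fact (b M : ℕ) :
    (Nat.factorial b : ℝ) * ∏ i ∈ range M, ((b:ℝ)+1+i) = (Nat.factorial (b+M) : ℝ) := by
  induction M with
  | zero => simp
  | succ M ih =>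
    rw [prod_range_succ, ← mul_assoc, ih, show b + (M+1) = (b+M)+1 by ring,
      Nat.factorial_succ]
    push_cast
    ring

lemma keyPhi (n : ℕ) (hn : 1 ≤ n) {u : ℝ} (hu : 0 < u) :
    ∑ k ∈ Icc 1 n, 2/((Nat.factorial (2*k)) : ℝ) * Phi (n-k) (2*k) u
      = if n = 1 then Real.log u + 3/2 else 0 := by
  have hune := hu.ne'
  rcases Nat.lt_or_ge n 2 with h2 | h2
  · have hn1 : n = 1 := by omega
    subst hn1
    rw [if_pos rfl]
    rw [show Icc 1 1 = {1} from Finset.Icc_self 1, sum_singleton]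
    norm_num [Phi_zero_two]
  · obtain ⟨p, rfl⟩ : ∃ p, n = p+2 := ⟨n-2, by omega⟩
    rw [if_neg (by omega)]
    set D : ℝ := 2*((Nat.factorial (2*p+1)):ℝ)/((Nat.factorial (2*p+4)):ℝ)
        * u^(-2*(p:ℤ)-2) with hD
    set w : ℕ → ℝ := fun g =>
      (2*(g:ℝ)-1) * (((2*(p+2)).choose (2*g) : ℕ):ℝ) * (bernoulli (2*g) : ℝ) with hw
    have hterm : ∀ k ∈ Icc 1 (p+2),
        2/((Nat.factorial (2*k)) : ℝ) * Phi (p+2-k) (2*k) u = D * w (p+2-k) := by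
      intro k hk
      rw [mem_Icc] at hk
      obtain ⟨hk1, hk2⟩ := hk
      by_cases hkp2 : k = p+2
      · subst hkp2
        have hg : p+2-(p+2) = 0 := by omega
        rw [hg]
        rw [show 2*(p+2) = (2*p+1)+3 by ring, Phi_zero_succ3]
        simp only [hw, Nat.cast_zero, mul_zero, Nat.choose_zero_right, Nat.cast_one, bernoulli_zero]
        rw [hD]
        rw [show (-((2*p+1:ℕ):ℤ) - 1) = -2*(p:ℤ)-2 by push_cast; ring]
        rw [Odd.neg_one_pow ⟨p, by ring⟩]
        rw [show 2*p+1+3 = 2*p+4 by ring]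
        have hf : ((Nat.factorial (2*p+4)):ℝ) ≠ 0 := by positivity
        have hf1 : ((Nat.factorial (2*p+1)):ℝ) ≠ 0 := by positivity
        push_cast
        field_simp
        ring
      · by_cases hkp1 : k = p+1
        · subst hkp1
          have hg : p+2-(p+1) = 1 := by omega
          rw [hg]
          rw [show 2*(p+1) = (2*p+1)+1 by ring, Phi_one_succ]
          simp only [hw]
          rw [hD]
          rw [show (-((2*p+1:ℕ):ℤ) - 1) = -2*(p:ℤ)-2 by push_cast; ring]
          rw [Odd.neg_one_pow ⟨p, by ring⟩]
          rw [choose_cast_eq (2*(p+2)) (2*1) (by omega)]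
          rw [show 2*(p+2) - 2*1 = 2*p+2 by omega]
          rw [show 2*(p+2) = 2*p+4 by ring]
          have hf4 : ((Nat.factorial (2*p+4)):ℝ)
              = (2*(p:ℝ)+4)*(2*(p:ℝ)+3)*(2*(p:ℝ)+2)*((Nat.factorial (2*p+1)):ℝ) := by
            rw [show 2*p+4 = (2*p+1)+1+1+1 by ring]
            rw [Nat.factorial_succ, Nat.factorial_succ, Nat.factorial_succ]
            push_cast
            ring
          have hf2 : ((Nat.factorial (2*p+2)):ℝ) = (2*(p:ℝ)+2)*((Nat.factorial (2*p+1)):ℝ) := by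
            rw [show 2*p+2 = (2*p+1)+1 by ring, Nat.factorial_succ]
            push_cast
            ring
          rw [hf4, hf2]
          rw [show (2*1 : ℕ).factorial = 2 by decide]
          have hb2 : bernoulli 2 = 1/6 := by
            rw [bernoulli_eq_bernoulli'_of_ne_one (by omega)]; exact bernoulli'_two
          push_cast [hb2]
          have hfne : ((Nat.factorial (2*p+1)):ℝ) ≠ 0 := by positivity
          field_simp
          ring
        · -- 1 ≤ k ≤ p, g = t+2 with t = p-k
          have hkp : k ≤ p := by omega
          set t := p - k with htdef
          have hg : p+2-k = t+2 := by omega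
          rw [hg]
          rw [Phi_g2]
          -- product evaluation
          have hprodneg : (∏ i ∈ range (2*k), ((2:ℝ) - 2*((t:ℝ)+2) - i))
              = (∏ i ∈ range (2*k), (((2*t+1:ℕ):ℝ)+1+i)) := by
            rw [show (∏ i ∈ range (2*k), ((2:ℝ) - 2*((t:ℝ)+2) - i))
                = ∏ i ∈ range (2*k), (-1) * (((2*t+1:ℕ):ℝ)+1+i) from
              prod_congr rfl (fun i _ => by push_cast; ring)]
            rw [prod_mul_distrib, prod_const, card_range]
            rw [Even.neg_one_pow ⟨k, two_mul k⟩, one_mul]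
          rw [hprodneg]
          have hprod : (∏ i ∈ range (2*k), (((2*t+1:ℕ):ℝ)+1+i))
              = ((Nat.factorial (2*p+1)):ℝ) / ((Nat.factorial (2*t+1)):ℝ) := by
            have := prod_fact (2*t+1) (2*k)
            rw [show 2*t+1+2*k = 2*p+1 by omega] at this
            rw [eq_div_iff (by positivity)]
            linear_combination this
          rw [hprod]
          rw [show (2 - 2*((t:ℤ)+2) - ((2*k:ℕ):ℤ)) = -2*(p:ℤ)-2 by push_cast; omega]
          simp only [hw]
          rw [hD]
          rw [choose_cast_eq (2*(p+2)) (2*(t+2)) (by omega)]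
          rw [show 2*(p+2) - 2*(t+2) = 2*k by omega]
          rw [show 2*(p+2) = 2*p+4 by ring]
          rw [show (2*(t+2)) = (2*t+4) by ring]
          have hf4 : ((Nat.factorial (2*t+4)):ℝ)
              = (2*(t:ℝ)+4)*(2*(t:ℝ)+3)*(2*(t:ℝ)+2)*((Nat.factorial (2*t+1)):ℝ) := by
            rw [show 2*t+4 = (2*t+1)+1+1+1 by ring]
            rw [Nat.factorial_succ, Nat.factorial_succ, Nat.factorial_succ]
            push_cast
            ring
          rw [hf4]
          have h1 : ((Nat.factorial (2*p+1)):ℝ) ≠ 0 := by positivity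
          have h2 : ((Nat.factorial (2*p+4)):ℝ) ≠ 0 := by positivity
          have h3 : ((Nat.factorial (2*t+1)):ℝ) ≠ 0 := by positivity
          have h4 : ((Nat.factorial (2*k)):ℝ) ≠ 0 := by positivity
          have h5 : (2*(t:ℝ)+4) ≠ 0 := by positivity
          have h6 : (2*(t:ℝ)+3) ≠ 0 := by positivity
          have h7 : (2*(t:ℝ)+2) ≠ 0 := by positivity
          rw [show (2*((t:ℝ)+2)*(2*((t:ℝ)+2)-2)) = (2*(t:ℝ)+4)*(2*(t:ℝ)+2) by ring]
          push_cast
          field_simp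
          ring
    rw [sum_congr rfl hterm, ← mul_sum]
    have hre : ∑ k ∈ Icc 1 (p+2), w (p+2-k) = ∑ g ∈ range (p+2), w g := by
      apply Finset.sum_nbij' (fun k => p+2-k) (fun g => p+2-g) <;>
        intro x hx <;> simp only [mem_Icc, mem_range] at * <;> first | omega | rfl
    rw [hre]
    have hbr : ∑ g ∈ range (p+2), w g = 0 := by
      have h := bern_id (p+2) (by omega)
      simp only [hw]
      exact_mod_cast congrArg (fun q : ℚ => (q:ℝ)) h
    rw [hbr, mul_zero]


lemma iter_local {s : Set ℝ} (hs : IsOpen s) (F : ℕ → ℝ → ℝ) (f : ℝ → ℝ)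
    (h0 : ∀ x ∈ s, f x = F 0 x)
    (hstep : ∀ m, ∀ x ∈ s, HasDerivAt (F m) (F (m+1) x) x) :
    ∀ m, ∀ x ∈ s, iteratedDeriv m f x = F m x := by
  intro m
  induction m with
  | zero => intro x hx; simpa using h0 x hx
  | succ m ih =>
    intro x hx
    rw [iteratedDeriv_succ]
    have hev : iteratedDeriv m f =ᶠ[nhds x] F m :=
      Filter.eventuallyEq_of_mem (hs.mem_nhds hx) ih
    rw [hev.deriv_eq, (hstep m x hx).deriv]

noncomputable def Q (c0 : ℝ) : ℕ → ℝ → ℝ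
  | 0, y => 3*y^2 + c0
  | 1, y => 6*y
  | 2, _ => 6
  | (_+3), _ => 0

lemma Q_hasDeriv (c0 : ℝ) (m : ℕ) (y : ℝ) : HasDerivAt (Q c0 m) (Q c0 (m+1) y) y := by
  match m with
  | 0 =>
    have h := ((hasDerivAt_pow 2 y).const_mul (3:ℝ)).add_const c0
    refine h.congr_deriv ?_
    symm
    show (6:ℝ)*y = _
    push_cast
    ring
  | 1 =>
    have h := ((hasDerivAt_id y).const_mul (6:ℝ))
    refine h.congr_deriv ?_
    symm
    show (6:ℝ) = _
    ring
  | 2 => exact hasDerivAt_const y 6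
  | (m+3) => exact hasDerivAt_const y 0

lemma slot (ε d : Fin 4 → ℝ) (hε : ∀ j, ε j = 1 ∨ ε j = -1) (c0 : ℝ)
    {s : Set ℝ} (hs : IsOpen s) {x : ℝ} (hx : x ∈ s)
    (hu : ∀ y ∈ s, ∀ j, 0 < ε j * y + d j)
    (Gv : ℕ → ℝ → ℝ)
    (hGv : ∀ g, ∀ y ∈ s, Gv g y
      = (∑ j, Phi g 0 (ε j * y + d j)) - (if g = 0 then 3*y^2 + c0 else 0))
    (n : ℕ) (hn : 1 ≤ n) :
    ∑ k ∈ Icc 1 n, 2/((Nat.factorial (2*k)):ℝ) * iteratedDeriv (2*k) (Gv (n-k)) x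
      = if n = 1 then ∑ j, Real.log (ε j * x + d j) else 0 := by
  set F : ℕ → ℕ → ℝ → ℝ := fun g m y =>
    (∑ j, (ε j)^m * Phi g m (ε j * y + d j)) - (if g = 0 then Q c0 m y else 0) with hF
  have hpow : ∀ (j : Fin 4) (k : ℕ), (ε j)^(2*k) = 1 := by
    intro j k
    rcases hε j with h | h <;> rw [h]
    · exact one_pow _
    · exact Even.neg_one_pow ⟨k, two_mul k⟩
  have hF0 : ∀ g, ∀ y ∈ s, Gv g y = F g 0 y := by
    intro g y hy
    rw [hGv g y hy, hF]
    simp only [pow_zero, one_mul]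
    congr 1
  have hFstep : ∀ g m, ∀ y ∈ s, HasDerivAt (F g m) (F g (m+1) y) y := by
    intro g m y hy
    apply HasDerivAt.sub
    · apply HasDerivAt.fun_sum
      intro j _
      have inner : HasDerivAt (fun y => ε j * y + d j) (ε j) y := by
        simpa using ((hasDerivAt_id y).const_mul (ε j)).add_const (d j)
      have h := ((Phi_hasDeriv g m (hu y hy j)).comp y inner).const_mul ((ε j)^m)
      refine h.congr_deriv ?_
      symm
      rw [pow_succ]
      ring
    · by_cases hg : g = 0
      · simp only [hg, if_pos]
        exact Q_hasDeriv c0 m y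
      · simp only [hg, if_neg, ite_false]
        exact hasDerivAt_const y 0
  have hiter : ∀ g m, iteratedDeriv m (Gv g) x = F g m x := fun g m =>
    iter_local hs (F g) (Gv g) (hF0 g) (hFstep g) m x hx
  calc ∑ k ∈ Icc 1 n, 2/((Nat.factorial (2*k)):ℝ) * iteratedDeriv (2*k) (Gv (n-k)) x
      = ∑ k ∈ Icc 1 n, ((∑ j, 2/((Nat.factorial (2*k)):ℝ) * Phi (n-k) (2*k) (ε j * x + d j))
          - (if k = n then 2/((Nat.factorial (2*n)):ℝ) * Q c0 (2*n) x else 0)) := by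
        apply sum_congr rfl
        intro k hk
        rw [mem_Icc] at hk
        rw [hiter, hF]
        simp only
        rw [mul_sub, mul_sum]
        congr 1
        · apply sum_congr rfl
          intro j _
          rw [hpow, one_mul]
        · by_cases hkn : k = n
          · rw [hkn]
            simp [Nat.sub_self]
          · rw [if_neg (by omega : ¬ (n - k = 0)), if_neg hkn, mul_zero]
    _ = (∑ j, ∑ k ∈ Icc 1 n, 2/((Nat.factorial (2*k)):ℝ) * Phi (n-k) (2*k) (ε j * x + d j))
          - 2/((Nat.factorial (2*n)):ℝ) * Q c0 (2*n) x := by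
        rw [sum_sub_distrib, sum_comm]
        congr 1
        rw [sum_ite_eq' (Icc 1 n) n]
        rw [if_pos (by rw [mem_Icc]; omega)]
    _ = (∑ j : Fin 4, if n = 1 then Real.log (ε j * x + d j) + 3/2 else 0)
          - 2/((Nat.factorial (2*n)):ℝ) * Q c0 (2*n) x := by
        congr 1
        apply sum_congr rfl
        intro j _
        exact keyPhi n hn (hu x hx j)
    _ = if n = 1 then ∑ j, Real.log (ε j * x + d j) else 0 := by
        by_cases hn1 : n = 1
        · subst hn1
          have hq : Q c0 (2*1) x = 6 := rfl
          simp only [if_pos rfl, hq, if_true]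
          rw [sum_add_distrib, sum_const, card_univ]
          norm_num [Nat.factorial]
        · rw [if_neg hn1]
          rw [sum_congr rfl (fun j _ => if_neg hn1)]
          have h2 : 2*n = (2*n-3)+3 := by omega
          rw [h2, show Q c0 ((2*n-3)+3) x = 0 from rfl]
          simp


/-- The formal series `G = Σ_{g≥0} ℏ^{2g−2} G_g(λ₀,λ₁,λ∞)` with
`G_0 = Σ_{ε,η} ((λ₀+ελ₁+ηλ∞)²/2)log(λ₀+ελ₁+ηλ∞) − 3(λ₀²+λ₁²+λ∞²)`,
`G_1 = −(1/12)log Λ`, `G_g = (B_{2g}/(2g(2g−2)))Σ_{ε,η}(λ₀+ελ₁+ηλ∞)^{2−2g}`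
(g ≥ 2), where `Λ = Π_{ε,η}(λ₀+ελ₁+ηλ∞)`, satisfies `X_j G = log Λ`
for each `j ∈ {0,1,∞}`, order by order in `ℏ`. -/
theorem stmt16 (G : ℕ → ℝ → ℝ → ℝ → ℝ)
    (hG0 : ∀ a b c : ℝ, 0 < a → 0 < b → 0 < c →
      0 < a + b + c → 0 < a + b - c → 0 < a - b + c → 0 < a - b - c →
      G 0 a b c =
        (a + b + c) ^ 2 / 2 * Real.log (a + b + c)
        + (a + b - c) ^ 2 / 2 * Real.log (a + b - c)
        + (a - b + c) ^ 2 / 2 * Real.log (a - b + c)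
        + (a - b - c) ^ 2 / 2 * Real.log (a - b - c)
        - 3 * (a ^ 2 + b ^ 2 + c ^ 2))
    (hG1 : ∀ a b c : ℝ, 0 < a → 0 < b → 0 < c →
      0 < a + b + c → 0 < a + b - c → 0 < a - b + c → 0 < a - b - c →
      G 1 a b c = -(1 / 12)
        * Real.log ((a + b + c) * (a + b - c) * (a - b + c) * (a - b - c)))
    (hGg : ∀ g : ℕ, 2 ≤ g → ∀ a b c : ℝ, 0 < a → 0 < b → 0 < c →
      0 < a + b + c → 0 < a + b - c → 0 < a - b + c → 0 < a - b - c →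
      G g a b c = (bernoulli (2 * g) : ℝ) / (2 * (g : ℝ) * (2 * (g : ℝ) - 2))
        * ((a + b + c) ^ (2 - 2 * (g : ℤ)) + (a + b - c) ^ (2 - 2 * (g : ℤ))
           + (a - b + c) ^ (2 - 2 * (g : ℤ)) + (a - b - c) ^ (2 - 2 * (g : ℤ))))
    (n : ℕ) (hn : 1 ≤ n) (a b c : ℝ) (ha : 0 < a) (hb : 0 < b) (hc : 0 < c)
    (h1 : 0 < a + b + c) (h2 : 0 < a + b - c) (h3 : 0 < a - b + c)
    (h4 : 0 < a - b - c) :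
    (∑ k ∈ Finset.Icc 1 n, 2 / (Nat.factorial (2 * k) : ℝ)
          * iteratedDeriv (2 * k) (fun y => G (n - k) y b c) a
        = if n = 1 then
            Real.log ((a + b + c) * (a + b - c) * (a - b + c) * (a - b - c))
          else 0)
    ∧ (∑ k ∈ Finset.Icc 1 n, 2 / (Nat.factorial (2 * k) : ℝ)
          * iteratedDeriv (2 * k) (fun y => G (n - k) a y c) b
        = if n = 1 then
            Real.log ((a + b + c) * (a + b - c) * (a - b + c) * (a - b - c))
          else 0)
    ∧ (∑ k ∈ Finset.Icc 1 n, 2 / (Nat.factorial (2 * k) : ℝ)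
          * iteratedDeriv (2 * k) (fun y => G (n - k) a b y) c
        = if n = 1 then
            Real.log ((a + b + c) * (a + b - c) * (a - b + c) * (a - b - c))
          else 0) := by
  refine ⟨?_, ?_, ?_⟩
  · -- slot a
    have hs : IsOpen {y : ℝ | 0 < y ∧ 0 < y+b+c ∧ 0 < y+b-c ∧ 0 < y-b+c ∧ 0 < y-b-c} := by
      refine IsOpen.and (isOpen_lt continuous_const continuous_id)
        (IsOpen.and (isOpen_lt continuous_const (by fun_prop))
        (IsOpen.and (isOpen_lt continuous_const (by fun_prop))
        (IsOpen.and (isOpen_lt continuous_const (by fun_prop))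
          (isOpen_lt continuous_const (by fun_prop)))))
    have hx : a ∈ {y : ℝ | 0 < y ∧ 0 < y+b+c ∧ 0 < y+b-c ∧ 0 < y-b+c ∧ 0 < y-b-c} :=
      ⟨ha, h1, h2, h3, h4⟩
    have hres := slot ![1,1,1,1] ![b+c, b-c, -b+c, -b-c]
      (by intro j; fin_cases j <;> simp) (3*(b^2+c^2)) hs hx
      (by
        rintro y ⟨hy0, hy1, hy2, hy3, hy4⟩ j
        fin_cases j <;> simp <;> linarith)
      (fun g y => G g y b c)
      (by
        rintro g y ⟨hy0, hy1, hy2, hy3, hy4⟩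
        match g with
        | 0 =>
          rw [Fin.sum_univ_four]
          simp only [Matrix.cons_val_zero, Matrix.cons_val_one, Matrix.head_cons,
            Matrix.cons_val_two, Matrix.tail_cons, Matrix.cons_val_three, one_mul,
            if_pos rfl, if_true]
          rw [hG0 y b c hy0 hb hc hy1 hy2 hy3 hy4]
          rw [show y + (b+c) = y+b+c by ring, show y + (b-c) = y+b-c by ring,
            show y + (-b+c) = y-b+c by ring, show y + (-b-c) = y-b-c by ring]
          rw [Phi_zero_zero, Phi_zero_zero, Phi_zero_zero, Phi_zero_zero]
          ring
        | 1 =>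
          rw [Fin.sum_univ_four]
          simp only [Matrix.cons_val_zero, Matrix.cons_val_one, Matrix.head_cons,
            Matrix.cons_val_two, Matrix.tail_cons, Matrix.cons_val_three, one_mul,
            if_neg one_ne_zero]
          rw [hG1 y b c hy0 hb hc hy1 hy2 hy3 hy4]
          rw [show y + (b+c) = y+b+c by ring, show y + (b-c) = y+b-c by ring,
            show y + (-b+c) = y-b+c by ring, show y + (-b-c) = y-b-c by ring]
          rw [Phi_one_zero, Phi_one_zero, Phi_one_zero, Phi_one_zero]
          rw [logsum _ _ _ _ hy1 hy2 hy3 hy4]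
          ring
        | (g+2) =>
          rw [Fin.sum_univ_four]
          simp only [Matrix.cons_val_zero, Matrix.cons_val_one, Matrix.head_cons,
            Matrix.cons_val_two, Matrix.tail_cons, Matrix.cons_val_three, one_mul,
            if_neg (by omega : ¬ (g+2 = 0))]
          rw [hGg (g+2) (by omega) y b c hy0 hb hc hy1 hy2 hy3 hy4]
          rw [show y + (b+c) = y+b+c by ring, show y + (b-c) = y+b-c by ring,
            show y + (-b+c) = y-b+c by ring, show y + (-b-c) = y-b-c by ring]
          rw [Phi_g2, Phi_g2, Phi_g2, Phi_g2]
          simp only [prod_range_zero, one_mul, Nat.cast_zero, sub_zero]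
          rw [show ((2:ℤ) - 2*((g:ℤ)+2)) = 2 - 2*((g+2:ℕ):ℤ) by push_cast; ring]
          push_cast
          ring)
      n hn
    rw [Fin.sum_univ_four] at hres
    simp only [Matrix.cons_val_zero, Matrix.cons_val_one, Matrix.head_cons,
      Matrix.cons_val_two, Matrix.tail_cons, Matrix.cons_val_three, one_mul] at hres
    rw [show a + (b+c) = a+b+c by ring, show a + (b-c) = a+b-c by ring,
      show a + (-b+c) = a-b+c by ring, show a + (-b-c) = a-b-c by ring] at hres
    rw [hres]
    by_cases hn1 : n = 1
    · rw [if_pos hn1, if_pos hn1, logsum _ _ _ _ h1 h2 h3 h4]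
    · rw [if_neg hn1, if_neg hn1]
  · -- slot b
    have hs : IsOpen {y : ℝ | 0 < y ∧ 0 < a+y+c ∧ 0 < a+y-c ∧ 0 < a-y+c ∧ 0 < a-y-c} := by
      refine IsOpen.and (isOpen_lt continuous_const continuous_id)
        (IsOpen.and (isOpen_lt continuous_const (by fun_prop))
        (IsOpen.and (isOpen_lt continuous_const (by fun_prop))
        (IsOpen.and (isOpen_lt continuous_const (by fun_prop))
          (isOpen_lt continuous_const (by fun_prop)))))
    have hx : b ∈ {y : ℝ | 0 < y ∧ 0 < a+y+c ∧ 0 < a+y-c ∧ 0 < a-y+c ∧ 0 < a-y-c} :=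
      ⟨hb, h1, h2, h3, h4⟩
    have hres := slot ![1,1,-1,-1] ![a+c, a-c, a+c, a-c]
      (by intro j; fin_cases j <;> simp) (3*(a^2+c^2)) hs hx
      (by
        rintro y ⟨hy0, hy1, hy2, hy3, hy4⟩ j
        fin_cases j <;> simp <;> linarith)
      (fun g y => G g a y c)
      (by
        rintro g y ⟨hy0, hy1, hy2, hy3, hy4⟩
        match g with
        | 0 =>
          rw [Fin.sum_univ_four]
          simp only [Matrix.cons_val_zero, Matrix.cons_val_one, Matrix.head_cons,
            Matrix.cons_val_two, Matrix.tail_cons, Matrix.cons_val_three, one_mul,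
            neg_one_mul, if_pos rfl, if_true]
          rw [hG0 a y c ha hy0 hc hy1 hy2 hy3 hy4]
          rw [show y + (a+c) = a+y+c by ring, show y + (a-c) = a+y-c by ring,
            show -y + (a+c) = a-y+c by ring, show -y + (a-c) = a-y-c by ring]
          rw [Phi_zero_zero, Phi_zero_zero, Phi_zero_zero, Phi_zero_zero]
          ring
        | 1 =>
          rw [Fin.sum_univ_four]
          simp only [Matrix.cons_val_zero, Matrix.cons_val_one, Matrix.head_cons,
            Matrix.cons_val_two, Matrix.tail_cons, Matrix.cons_val_three, one_mul,
            neg_one_mul, if_neg one_ne_zero]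
          rw [hG1 a y c ha hy0 hc hy1 hy2 hy3 hy4]
          rw [show y + (a+c) = a+y+c by ring, show y + (a-c) = a+y-c by ring,
            show -y + (a+c) = a-y+c by ring, show -y + (a-c) = a-y-c by ring]
          rw [Phi_one_zero, Phi_one_zero, Phi_one_zero, Phi_one_zero]
          rw [logsum _ _ _ _ hy1 hy2 hy3 hy4]
          ring
        | (g+2) =>
          rw [Fin.sum_univ_four]
          simp only [Matrix.cons_val_zero, Matrix.cons_val_one, Matrix.head_cons,
            Matrix.cons_val_two, Matrix.tail_cons, Matrix.cons_val_three, one_mul,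
            neg_one_mul, if_neg (by omega : ¬ (g+2 = 0))]
          rw [hGg (g+2) (by omega) a y c ha hy0 hc hy1 hy2 hy3 hy4]
          rw [show y + (a+c) = a+y+c by ring, show y + (a-c) = a+y-c by ring,
            show -y + (a+c) = a-y+c by ring, show -y + (a-c) = a-y-c by ring]
          rw [Phi_g2, Phi_g2, Phi_g2, Phi_g2]
          simp only [prod_range_zero, one_mul, Nat.cast_zero, sub_zero]
          rw [show ((2:ℤ) - 2*((g:ℤ)+2)) = 2 - 2*((g+2:ℕ):ℤ) by push_cast; ring]
          push_cast
          ring)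
      n hn
    rw [Fin.sum_univ_four] at hres
    simp only [Matrix.cons_val_zero, Matrix.cons_val_one, Matrix.head_cons,
      Matrix.cons_val_two, Matrix.tail_cons, Matrix.cons_val_three, one_mul,
      neg_one_mul] at hres
    rw [show b + (a+c) = a+b+c by ring, show b + (a-c) = a+b-c by ring,
      show -b + (a+c) = a-b+c by ring, show -b + (a-c) = a-b-c by ring] at hres
    rw [hres]
    by_cases hn1 : n = 1
    · rw [if_pos hn1, if_pos hn1, logsum _ _ _ _ h1 h2 h3 h4]
    · rw [if_neg hn1, if_neg hn1]
  · -- slot c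
    have hs : IsOpen {y : ℝ | 0 < y ∧ 0 < a+b+y ∧ 0 < a+b-y ∧ 0 < a-b+y ∧ 0 < a-b-y} := by
      refine IsOpen.and (isOpen_lt continuous_const continuous_id)
        (IsOpen.and (isOpen_lt continuous_const (by fun_prop))
        (IsOpen.and (isOpen_lt continuous_const (by fun_prop))
        (IsOpen.and (isOpen_lt continuous_const (by fun_prop))
          (isOpen_lt continuous_const (by fun_prop)))))
    have hx : c ∈ {y : ℝ | 0 < y ∧ 0 < a+b+y ∧ 0 < a+b-y ∧ 0 < a-b+y ∧ 0 < a-b-y} :=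
      ⟨hc, h1, h2, h3, h4⟩
    have hres := slot ![1,-1,1,-1] ![a+b, a+b, a-b, a-b]
      (by intro j; fin_cases j <;> simp) (3*(a^2+b^2)) hs hx
      (by
        rintro y ⟨hy0, hy1, hy2, hy3, hy4⟩ j
        fin_cases j <;> simp <;> linarith)
      (fun g y => G g a b y)
      (by
        rintro g y ⟨hy0, hy1, hy2, hy3, hy4⟩
        match g with
        | 0 =>
          rw [Fin.sum_univ_four]
          simp only [Matrix.cons_val_zero, Matrix.cons_val_one, Matrix.head_cons,
            Matrix.cons_val_two, Matrix.tail_cons, Matrix.cons_val_three, one_mul,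
            neg_one_mul, if_pos rfl, if_true]
          rw [hG0 a b y ha hb hy0 hy1 hy2 hy3 hy4]
          rw [show y + (a+b) = a+b+y by ring, show -y + (a+b) = a+b-y by ring,
            show y + (a-b) = a-b+y by ring, show -y + (a-b) = a-b-y by ring]
          rw [Phi_zero_zero, Phi_zero_zero, Phi_zero_zero, Phi_zero_zero]
          ring
        | 1 =>
          rw [Fin.sum_univ_four]
          simp only [Matrix.cons_val_zero, Matrix.cons_val_one, Matrix.head_cons,
            Matrix.cons_val_two, Matrix.tail_cons, Matrix.cons_val_three, one_mul,
            neg_one_mul, if_neg one_ne_zero]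
          rw [hG1 a b y ha hb hy0 hy1 hy2 hy3 hy4]
          rw [show y + (a+b) = a+b+y by ring, show -y + (a+b) = a+b-y by ring,
            show y + (a-b) = a-b+y by ring, show -y + (a-b) = a-b-y by ring]
          rw [Phi_one_zero, Phi_one_zero, Phi_one_zero, Phi_one_zero]
          rw [logsum _ _ _ _ hy1 hy2 hy3 hy4]
          ring
        | (g+2) =>
          rw [Fin.sum_univ_four]
          simp only [Matrix.cons_val_zero, Matrix.cons_val_one, Matrix.head_cons,
            Matrix.cons_val_two, Matrix.tail_cons, Matrix.cons_val_three, one_mul,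
            neg_one_mul, if_neg (by omega : ¬ (g+2 = 0))]
          rw [hGg (g+2) (by omega) a b y ha hb hy0 hy1 hy2 hy3 hy4]
          rw [show y + (a+b) = a+b+y by ring, show -y + (a+b) = a+b-y by ring,
            show y + (a-b) = a-b+y by ring, show -y + (a-b) = a-b-y by ring]
          rw [Phi_g2, Phi_g2, Phi_g2, Phi_g2]
          simp only [prod_range_zero, one_mul, Nat.cast_zero, sub_zero]
          rw [show ((2:ℤ) - 2*((g:ℤ)+2)) = 2 - 2*((g+2:ℕ):ℤ) by push_cast; ring]
          push_cast
          ring)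
      n hn
    rw [Fin.sum_univ_four] at hres
    simp only [Matrix.cons_val_zero, Matrix.cons_val_one, Matrix.head_cons,
      Matrix.cons_val_two, Matrix.tail_cons, Matrix.cons_val_three, one_mul,
      neg_one_mul] at hres
    rw [show c + (a+b) = a+b+c by ring, show -c + (a+b) = a+b-c by ring,
      show c + (a-b) = a-b+c by ring, show -c + (a-b) = a-b-c by ring] at hres
    rw [hres]
    by_cases hn1 : n = 1
    · rw [if_pos hn1, if_pos hn1, logsum _ _ _ _ h1 h2 h3 h4]
    · rw [if_neg hn1, if_neg hn1]
end

section
/- (Gauss curve) Let λ₀, λ₁, λ∞ > 0 satisfy λ₀ + ελ₁ + ηλ∞ > 0 for all ε, η ∈ {+1,−1}, and set Λ = Π_{ε,η∈{±1}} (λ₀+ελ₁+ηλ∞). Define F_0 = Σ_{ε,η∈{±1}} ((λ₀+ελ₁+ηλ∞)²/2)·log(λ₀+ελ₁+ηλ∞) − 2λ₀²log(2λ₀) − 2λ₁²log(2λ₁) − 2λ∞²log(2λ∞), F_1 = −(1/12)·log( Λ/(λ₀λ₁λ∞) ), and F_g = (B_{2g}/(2g(2g−2)))·( Σ_{ε,η∈{±1}}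 (λ₀+ελ₁+ηλ∞)^{2−2g} − (2λ₀)^{2−2g} − (2λ₁)^{2−2g} − (2λ∞)^{2−2g} ) for g ≥ 2. Then for each j ∈ {0,1,∞} and every integer n ≥ 1, Σ_{k=1}^{n} (2/(2k)!) · ∂_{λ_j}^{2k} F_{n−k} = log Λ − 4·log(2λ_j) if n = 1, and = (1/(n−1))·(2λ_j)^{2−2n} if n ≥ 2. (That is, the free energy F = Σ_{g≥0} ℏ^{2g−2} F_g of the Gauss spectral curve satisfies the three-term difference equation X_j F = log Λ − 2log(2λ_j) − log(2λ_j+ℏ) − log(2λ_j−ℏ) for each j ∈ {0,1,∞}, order by order in ℏ.) -/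
open Finset



section IterTower

lemma iter_on_open {S : Set ℝ} (hS : IsOpen S) (f : ℝ → ℝ) (g : ℕ → ℝ → ℝ)
    (h0 : ∀ x ∈ S, f x = g 0 x)
    (hstep : ∀ m, ∀ x ∈ S, HasDerivAt (g m) (g (m+1) x) x) :
    ∀ m, ∀ x ∈ S, iteratedDeriv m f x = g m x := by
  intro m
  induction m with
  | zero => simpa using h0
  | succ m ih =>
    intro x hx
    rw [iteratedDeriv_succ]
    have hev : iteratedDeriv m f =ᶠ[nhds x] g m :=
      Filter.eventuallyEq_of_mem (hS.mem_nhds hx) ih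
    rw [hev.deriv_eq, (hstep m x hx).deriv]

lemma hasDerivAt_affine (e c x : ℝ) : HasDerivAt (fun y => e * y + c) e x := by
  simpa using ((hasDerivAt_id x).const_mul e).add_const c

noncomputable def Tlog (e c : ℝ) : ℕ → ℝ → ℝ
  | 0, y => Real.log (e * y + c)
  | (m+1), y => (-1)^m * (m.factorial : ℝ) * e^(m+1) * (e * y + c) ^ (-(m+1 : ℕ) : ℤ)

lemma Tlog_step (e c : ℝ) (m : ℕ) (y : ℝ) (h : e * y + c ≠ 0) :
    HasDerivAt (Tlog e c m) (Tlog e c (m+1) y) y := by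
  have haff := hasDerivAt_affine e c y
  cases m with
  | zero =>
    have key : HasDerivAt (fun z => Real.log (e * z + c)) ((e*y+c)⁻¹ * e) y :=
      (Real.hasDerivAt_log h).comp (h₂ := Real.log) y haff
    show HasDerivAt (fun z => Real.log (e * z + c))
      ((-1:ℝ)^0 * ((0:ℕ).factorial : ℝ) * e^(0+1) * (e * y + c) ^ (-(0+1 : ℕ) : ℤ)) y
    refine key.congr_deriv ?_
    simp [zpow_neg]
    ring
  | succ m =>
    have key := ((hasDerivAt_zpow (-(m+1 : ℕ) : ℤ) (e*y+c) (Or.inl h)).comp y haff).const_mul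
      ((-1:ℝ)^m * (m.factorial : ℝ) * e^(m+1))
    show HasDerivAt
      (fun z => (-1:ℝ)^m * (m.factorial : ℝ) * e^(m+1) * (e * z + c) ^ (-(m+1 : ℕ) : ℤ))
      ((-1:ℝ)^(m+1) * ((m+1).factorial : ℝ) * e^(m+1+1) * (e * y + c) ^ (-(m+1+1 : ℕ) : ℤ)) y
    refine key.congr_deriv ?_
    have he : (-(m+1+1 : ℕ) : ℤ) = (-(m+1 : ℕ) : ℤ) - 1 := by push_cast; ring
    rw [he]
    push_cast [Nat.factorial_succ]
    ring

noncomputable def Tpow (s : ℤ) (e c : ℝ) (m : ℕ) (y : ℝ) : ℝ :=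
  (∏ i ∈ range m, ((s : ℝ) - i)) * e^m * (e * y + c) ^ (s - m)

lemma Tpow_step (s : ℤ) (e c : ℝ) (m : ℕ) (y : ℝ) (h : e * y + c ≠ 0) :
    HasDerivAt (Tpow s e c m) (Tpow s e c (m+1) y) y := by
  have haff := hasDerivAt_affine e c y
  have key := ((hasDerivAt_zpow (s - m) (e*y+c) (Or.inl h)).comp y haff).const_mul
    ((∏ i ∈ range m, ((s : ℝ) - i)) * e^m)
  show HasDerivAt
    (fun z => (∏ i ∈ range m, ((s : ℝ) - i)) * e^m * (e * z + c) ^ (s - (m:ℕ) : ℤ))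
    ((∏ i ∈ range (m+1), ((s : ℝ) - i)) * e^(m+1) * (e * y + c) ^ (s - (m+1 : ℕ) : ℤ)) y
  refine key.congr_deriv ?_
  rw [prod_range_succ]
  have he : (s - (m+1 : ℕ) : ℤ) = (s - (m:ℕ) : ℤ) - 1 := by push_cast; ring
  rw [he]
  push_cast
  ring

noncomputable def TL (e c : ℝ) : ℕ → ℝ → ℝ
  | 0, y => (e * y + c)^2 / 2 * Real.log (e * y + c)
  | 1, y => e * ((e * y + c) * Real.log (e * y + c) + (e * y + c) / 2)
  | 2, y => e^2 * (Real.log (e * y + c) + 3/2)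
  | (m+3), y => e^(m+3) * (-1)^m * (m.factorial : ℝ) * (e * y + c) ^ (-(m+1 : ℕ) : ℤ)

lemma TL_step (e c : ℝ) (m : ℕ) (y : ℝ) (h : e * y + c ≠ 0) :
    HasDerivAt (TL e c m) (TL e c (m+1) y) y := by
  have haff := hasDerivAt_affine e c y
  have hlog : HasDerivAt (fun z => Real.log (e * z + c)) ((e*y+c)⁻¹ * e) y :=
    (Real.hasDerivAt_log h).comp (h₂ := Real.log) y haff
  match m with
  | 0 =>
    have key := ((haff.pow 2).div_const 2).mul hlog
    show HasDerivAt (fun z => (e * z + c)^2 / 2 * Real.log (e * z + c))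
      (e * ((e * y + c) * Real.log (e * y + c) + (e * y + c) / 2)) y
    refine key.congr_deriv ?_
    push_cast
    simp only [Pi.pow_apply]
    field_simp
  | 1 =>
    have key := ((haff.mul hlog).add (haff.div_const 2)).const_mul e
    show HasDerivAt (fun z => e * ((e * z + c) * Real.log (e * z + c) + (e * z + c) / 2))
      (e^2 * (Real.log (e * y + c) + 3/2)) y
    refine key.congr_deriv ?_
    field_simp
    ring
  | 2 =>
    have key := (hlog.add_const (3/2 : ℝ)).const_mul (e^2)
    show HasDerivAt (fun z => e^2 * (Real.log (e * z + c) + 3/2))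
      (e^(0+3) * (-1:ℝ)^0 * ((0:ℕ).factorial : ℝ) * (e * y + c) ^ (-(0+1 : ℕ) : ℤ)) y
    refine key.congr_deriv ?_
    simp [zpow_neg]
    ring
  | (m+3) =>
    have key := ((hasDerivAt_zpow (-(m+1 : ℕ) : ℤ) (e*y+c) (Or.inl h)).comp y haff).const_mul
      (e^(m+3) * (-1:ℝ)^m * (m.factorial : ℝ))
    show HasDerivAt
      (fun z => e^(m+3) * (-1:ℝ)^m * (m.factorial : ℝ) * (e * z + c) ^ (-(m+1 : ℕ) : ℤ))
      (e^(m+1+3) * (-1:ℝ)^(m+1) * ((m+1).factorial : ℝ) * (e * y + c) ^ (-(m+1+1 : ℕ) : ℤ)) y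
    refine key.congr_deriv ?_
    have he : (-(m+1+1 : ℕ) : ℤ) = (-(m+1 : ℕ) : ℤ) - 1 := by push_cast; ring
    rw [he]
    push_cast [Nat.factorial_succ]
    ring

end IterTower


section QIdent

lemma nat_choose_id (m j : ℕ) :
    m * m.choose j = m * (m-1).choose j + j * m.choose j := by
  match m, j with
  | 0, j => cases j <;> simp [Nat.choose]
  | m+1, 0 => simp
  | m+1, j+1 =>
    have h1 : (m+1) * Nat.choose m j = Nat.choose (m+1) (j+1) * (j+1) :=
      Nat.add_one_mul_choose_eq m j
    have h2 : Nat.choose (m+1) (j+1) = Nat.choose m j + Nat.choose m (j+1) :=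
      Nat.choose_succ_succ m j
    simp only [Nat.add_sub_cancel]
    rw [h2]
    nlinarith [h1, h2]

lemma bp_eval (n : ℕ) (t : ℚ) : (Polynomial.bernoulli n).eval t
    = ∑ i ∈ range (n+1), bernoulli i * (n.choose i : ℚ) * t^(n-i) := by
  rw [Polynomial.bernoulli, Polynomial.eval_finset_sum]
  exact Finset.sum_congr rfl fun i _ => by rw [Polynomial.eval_monomial]

lemma SB_eval (m : ℕ) (hm : 1 ≤ m) (t : ℚ) :
    ∑ j ∈ range (m+1), (m.choose j : ℚ) * ((j:ℚ) - 1) * bernoulli j * t^(m-j)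
      = ((m:ℚ) - 1) * (Polynomial.bernoulli m).eval t
        - (m:ℚ) * t * (Polynomial.bernoulli (m-1)).eval t := by
  rw [bp_eval, bp_eval]
  have hm1 : m - 1 + 1 = m := Nat.succ_pred_eq_of_pos hm
  have h2 : (m:ℚ) * t * ∑ i ∈ range (m-1+1), bernoulli i * ((m-1).choose i : ℚ) * t^(m-1-i)
      = ∑ i ∈ range (m+1), (m:ℚ) * bernoulli i * ((m-1).choose i : ℚ) * t^(m-i) := by
    rw [hm1, Finset.mul_sum]
    rw [Finset.sum_range_succ (fun i => (m:ℚ) * bernoulli i * ((m-1).choose i : ℚ) * t^(m-i))]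
    have hz : ((m-1).choose m : ℚ) = 0 := by
      rw [Nat.choose_eq_zero_of_lt (by omega)]; simp
    rw [hz]
    simp only [mul_zero, zero_mul, add_zero]
    refine Finset.sum_congr rfl fun i hi => ?_
    have hi' : i < m := Finset.mem_range.mp hi
    have : m - 1 - i + 1 = m - i := by omega
    rw [← this, pow_succ]
    ring
  rw [h2, Finset.mul_sum, ← Finset.sum_sub_distrib]
  refine Finset.sum_congr rfl fun j hj => ?_
  have hc : (m:ℚ) * (m.choose j : ℚ) = (m:ℚ) * ((m-1).choose j : ℚ) + (j:ℚ) * (m.choose j : ℚ) := by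
    exact_mod_cast nat_choose_id m j
  linear_combination (-(bernoulli j * t^(m-j))) * hc

lemma sum_even_odd_split (h : ℕ → ℚ) (n : ℕ) :
    ∑ j ∈ range (2*n+1), h j
      = (∑ i ∈ range (n+1), h (2*i)) + ∑ i ∈ range n, h (2*i+1) := by
  induction n with
  | zero => simp
  | succ n ih =>
    have e1 : 2*(n+1)+1 = (2*n+1) + 1 + 1 := by ring
    rw [e1, Finset.sum_range_succ, Finset.sum_range_succ, ih,
      Finset.sum_range_succ (fun i => h (2*i)) (n+1), Finset.sum_range_succ (fun i => h (2*i+1)) n]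
    have e2 : 2*n+1+1 = 2*(n+1) := by ring
    rw [e2]
    ring

lemma bernoulli_odd_zero {j : ℕ} (hodd : Odd j) (hj : 1 < j) : bernoulli j = 0 := by
  rw [bernoulli_eq_bernoulli'_of_ne_one (by omega)]
  exact bernoulli'_eq_zero_of_odd hodd hj

/-- The central evaluation. -/
lemma Qsum (n : ℕ) (hn : 2 ≤ n) (t : ℚ) :
    ∑ k ∈ Icc 1 n, ((2*n).choose (2*k) : ℚ) * (((2*(n-k) : ℕ):ℚ) - 1)
        * bernoulli (2*(n-k)) * t^(2*k)
      = (((2*n : ℕ):ℚ) - 1) * (Polynomial.bernoulli (2*n)).eval t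
        - ((2*n : ℕ):ℚ) * t * (Polynomial.bernoulli (2*n-1)).eval t
        - (((2*n : ℕ):ℚ) - 1) * bernoulli (2*n) := by
  set h : ℕ → ℚ := fun j => ((2*n).choose j : ℚ) * ((j:ℚ) - 1) * bernoulli j * t^(2*n-j) with hh
  have hterm : ∀ k ∈ Icc 1 n,
      ((2*n).choose (2*k) : ℚ) * (((2*(n-k) : ℕ):ℚ) - 1) * bernoulli (2*(n-k)) * t^(2*k)
        = h (2*(n-k)) := by
    intro k hk
    rw [Finset.mem_Icc] at hk
    have hkn : k ≤ n := hk.2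
    have hle : 2*(n-k) ≤ 2*n := by omega
    have hcs : (2*n).choose (2*n - 2*(n-k)) = (2*n).choose (2*(n-k)) := Nat.choose_symm hle
    have he1 : 2*n - 2*(n-k) = 2*k := by omega
    have hcs' : (2*n).choose (2*(n-k)) = (2*n).choose (2*k) := by
      rw [← Nat.choose_symm hle, he1]
    simp only [hh, hcs', he1]
  rw [Finset.sum_congr rfl hterm]
  have hins : range (n+1) = insert 0 (Icc 1 n) := by
    ext j; simp [Finset.mem_range, Finset.mem_Icc]; omega
  have hsum1 : ∑ j ∈ range (n+1), h (2*(n-j)) = h (2*n) + ∑ k ∈ Icc 1 n, h (2*(n-k)) := by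
    rw [hins, Finset.sum_insert (by simp)]
    norm_num
  have hrefl : ∑ j ∈ range (n+1), h (2*(n-j)) = ∑ i ∈ range (n+1), h (2*i) := by
    have := Finset.sum_range_reflect (fun i => h (2*i)) (n+1)
    rw [← this]
    refine Finset.sum_congr rfl fun j hj => ?_
    have hj' : j < n + 1 := Finset.mem_range.mp hj
    first
    | rfl
    | (congr 2; omega)
  have hodd : ∑ i ∈ range n, h (2*i+1) = 0 := by
    refine Finset.sum_eq_zero fun i _ => ?_
    rw [hh]
    simp only []
    rcases Nat.eq_zero_or_pos i with hi | hi
    · subst hi; norm_num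
    · rw [bernoulli_odd_zero ⟨i, by ring⟩ (by omega)]
      try ring
  have hfull := sum_even_odd_split h n
  have hSB := SB_eval (2*n) (by omega) t
  have hSB' : ∑ j ∈ range (2*n+1), h j
      = (((2*n : ℕ):ℚ) - 1) * (Polynomial.bernoulli (2*n)).eval t
        - ((2*n : ℕ):ℚ) * t * (Polynomial.bernoulli (2*n-1)).eval t := by
    rw [← hSB]
    try exact Finset.sum_congr rfl fun j _ => rfl
  have h2n : h (2*n) = (((2*n : ℕ):ℚ) - 1) * bernoulli (2*n) := by
    rw [hh]
    simp [Nat.choose_self]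
  have : ∑ k ∈ Icc 1 n, h (2*(n-k)) = ∑ j ∈ range (2*n+1), h j - h (2*n) := by
    rw [hfull, hodd, add_zero, ← hrefl, hsum1]
    try ring
  rw [this, hSB', h2n]
  try ring

lemma Q1 (n : ℕ) (hn : 2 ≤ n) :
    ∑ k ∈ Icc 1 n, ((2*n).choose (2*k) : ℚ) * (((2*(n-k) : ℕ):ℚ) - 1)
        * bernoulli (2*(n-k)) = 0 := by
  have := Qsum n hn 1
  simp only [one_pow, mul_one] at this
  rw [this]
  have hodd : (Polynomial.bernoulli (2*n-1)).eval (1:ℚ) = 0 := by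
    rw [Polynomial.bernoulli_eval_one]
    exact bernoulli'_eq_zero_of_odd ⟨n-1, by omega⟩ (by omega)
  rw [Polynomial.bernoulli_eval_one, hodd,
    ← bernoulli_eq_bernoulli'_of_ne_one (by omega)]
  ring

lemma Q2 (n : ℕ) (hn : 2 ≤ n) :
    ∑ k ∈ Icc 1 n, ((2*n).choose (2*k) : ℚ) * (((2*(n-k) : ℕ):ℚ) - 1)
        * bernoulli (2*(n-k)) * 4^k
      = -(((2*n:ℕ):ℚ)) * (((2*n:ℕ):ℚ) - 1) := by
  have hq := Qsum n hn 2
  have hlhs : ∑ k ∈ Icc 1 n, ((2*n).choose (2*k) : ℚ) * (((2*(n-k) : ℕ):ℚ) - 1)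
        * bernoulli (2*(n-k)) * 4^k
      = ∑ k ∈ Icc 1 n, ((2*n).choose (2*k) : ℚ) * (((2*(n-k) : ℕ):ℚ) - 1)
        * bernoulli (2*(n-k)) * 2^(2*k) := by
    refine Finset.sum_congr rfl fun k _ => ?_
    rw [pow_mul]
    norm_num
  rw [hlhs, hq]
  have he2 : ∀ m : ℕ, (Polynomial.bernoulli m).eval (2:ℚ)
      = bernoulli' m + m := by
    intro m
    have := Polynomial.bernoulli_eval_one_add m 1
    norm_num at this
    exact this
  rw [he2, he2]
  have hodd : bernoulli' (2*n-1) = 0 :=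
    bernoulli'_eq_zero_of_odd ⟨n-1, by omega⟩ (by omega)
  rw [hodd, ← bernoulli_eq_bernoulli'_of_ne_one (show 2*n ≠ 1 by omega)]
  have hc : ((2*n-1 : ℕ):ℚ) = ((2*n:ℕ):ℚ) - 1 := by
    rw [Nat.cast_sub (by omega : 1 ≤ 2*n)]
    norm_num
  rw [hc]
  push_cast
  ring

end QIdent
noncomputable def Cg (g : ℕ) : ℝ := ((bernoulli (2*g) : ℚ) : ℝ) / (2*(g:ℝ)*(2*(g:ℝ)-2))

lemma prod_cast_fac (p : ℕ) : ∀ m : ℕ,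
    ∏ i ∈ range m, (-(p:ℝ) - 1 - i) = (-1)^m * ((p+m).factorial : ℝ) / (p.factorial : ℝ)
  | 0 => by simp [Nat.factorial_ne_zero, div_self]
  | (m+1) => by
    rw [prod_range_succ, prod_cast_fac p m]
    have h1 : (p + (m+1)).factorial = (p+m+1) * (p+m).factorial := by
      rw [show p + (m+1) = (p+m)+1 by ring, Nat.factorial_succ]
    rw [h1]
    have h2 : (p.factorial : ℝ) ≠ 0 := Nat.cast_ne_zero.mpr (Nat.factorial_ne_zero p)
    field_simp
    push_cast
    ring

lemma Cg_def (g : ℕ) : Cg g = ((bernoulli (2*g) : ℚ) : ℝ) / (2*(g:ℝ)*(2*(g:ℝ)-2)) := rfl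

set_option maxHeartbeats 1000000 in
lemma master (G : ℕ → ℝ → ℝ) (e1 c1 e2 c2 e3 c3 e4 c4 : ℝ)
    (he1 : e1^2 = 1) (he2 : e2^2 = 1) (he3 : e3^2 = 1) (he4 : e4^2 = 1)
    (n : ℕ) (hn : 1 ≤ n) (x : ℝ)
    (hx0 : 0 < x) (hx1 : 0 < e1*x+c1) (hx2 : 0 < e2*x+c2) (hx3 : 0 < e3*x+c3)
    (hx4 : 0 < e4*x+c4)
    (K0 K1 : ℝ) (Kg : ℕ → ℝ)
    (hG0 : ∀ y : ℝ, 0 < y → 0 < e1*y+c1 → 0 < e2*y+c2 → 0 < e3*y+c3 → 0 < e4*y+c4 →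
      G 0 y = (e1*y+c1)^2/2 * Real.log (e1*y+c1) + (e2*y+c2)^2/2 * Real.log (e2*y+c2)
        + (e3*y+c3)^2/2 * Real.log (e3*y+c3) + (e4*y+c4)^2/2 * Real.log (e4*y+c4)
        - (2*y)^2/2 * Real.log (2*y) + K0)
    (hG1 : ∀ y : ℝ, 0 < y → 0 < e1*y+c1 → 0 < e2*y+c2 → 0 < e3*y+c3 → 0 < e4*y+c4 →
      G 1 y = -(1/12) * (Real.log (e1*y+c1) + Real.log (e2*y+c2) + Real.log (e3*y+c3)
        + Real.log (e4*y+c4) - Real.log y) + K1)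
    (hGg : ∀ g : ℕ, 2 ≤ g → ∀ y : ℝ, 0 < y → 0 < e1*y+c1 → 0 < e2*y+c2 → 0 < e3*y+c3 →
      0 < e4*y+c4 →
      G g y = Cg g * ((e1*y+c1)^(2-2*(g:ℤ)) + (e2*y+c2)^(2-2*(g:ℤ)) + (e3*y+c3)^(2-2*(g:ℤ))
        + (e4*y+c4)^(2-2*(g:ℤ)) - (2*y)^(2-2*(g:ℤ))) + Kg g) :
    ∑ k ∈ Icc 1 n, 2 / ((2*k).factorial : ℝ) * iteratedDeriv (2*k) (G (n-k)) x
      = if n = 1 then Real.log ((e1*x+c1)*(e2*x+c2)*(e3*x+c3)*(e4*x+c4)) - 4*Real.log (2*x)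
        else 1/((n:ℝ)-1) * (2*x)^(2-2*(n:ℤ)) := by
  classical
  set S : Set ℝ := {y : ℝ | 0 < y ∧ 0 < e1*y+c1 ∧ 0 < e2*y+c2 ∧ 0 < e3*y+c3 ∧ 0 < e4*y+c4}
    with hSdef
  have hSopen : IsOpen S := by
    have : S = {y : ℝ | 0 < y} ∩ ({y : ℝ | 0 < e1*y+c1} ∩ ({y : ℝ | 0 < e2*y+c2}
        ∩ ({y : ℝ | 0 < e3*y+c3} ∩ {y : ℝ | 0 < e4*y+c4}))) := rfl
    rw [this]
    refine (isOpen_lt continuous_const continuous_id).inter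
      ((isOpen_lt continuous_const (by fun_prop)).inter
        ((isOpen_lt continuous_const (by fun_prop)).inter
          ((isOpen_lt continuous_const (by fun_prop)).inter
            (isOpen_lt continuous_const (by fun_prop)))))
  have hx : x ∈ S := ⟨hx0, hx1, hx2, hx3, hx4⟩
  -- towers for the three regimes
  have d0 : ∀ m, ∀ y ∈ S, iteratedDeriv m (G 0) y
      = TL e1 c1 m y + TL e2 c2 m y + TL e3 c3 m y + TL e4 c4 m y - TL 2 0 m y
        + (if m = 0 then K0 else 0) := by
    refine iter_on_open hSopen (G 0)
      (fun m y => TL e1 c1 m y + TL e2 c2 m y + TL e3 c3 m y + TL e4 c4 m y - TL 2 0 m y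
        + (if m = 0 then K0 else 0)) ?_ ?_
    · rintro y ⟨hy0, hy1, hy2, hy3, hy4⟩
      rw [hG0 y hy0 hy1 hy2 hy3 hy4]
      simp only [TL, if_pos rfl, add_zero, mul_zero]
      norm_num
    · rintro m y ⟨hy0, hy1, hy2, hy3, hy4⟩
      have h5 : 2*y+0 ≠ 0 := by positivity
      have key := ((((((TL_step e1 c1 m y (ne_of_gt hy1)).add
        (TL_step e2 c2 m y (ne_of_gt hy2))).add
        (TL_step e3 c3 m y (ne_of_gt hy3))).add
        (TL_step e4 c4 m y (ne_of_gt hy4))).sub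
        (TL_step 2 0 m y h5)).add_const (if m = 0 then K0 else 0))
      refine key.congr_deriv ?_
      simp
  have d1 : ∀ m, ∀ y ∈ S, iteratedDeriv m (G 1) y
      = -(1/12) * (Tlog e1 c1 m y + Tlog e2 c2 m y + Tlog e3 c3 m y + Tlog e4 c4 m y
          - Tlog 1 0 m y) + (if m = 0 then K1 else 0) := by
    refine iter_on_open hSopen (G 1)
      (fun m y => -(1/12) * (Tlog e1 c1 m y + Tlog e2 c2 m y + Tlog e3 c3 m y + Tlog e4 c4 m y
          - Tlog 1 0 m y) + (if m = 0 then K1 else 0)) ?_ ?_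
    · rintro y ⟨hy0, hy1, hy2, hy3, hy4⟩
      rw [hG1 y hy0 hy1 hy2 hy3 hy4]
      simp only [Tlog, if_pos rfl, one_mul, add_zero]
      norm_num
    · rintro m y ⟨hy0, hy1, hy2, hy3, hy4⟩
      have h5 : (1:ℝ)*y+0 ≠ 0 := by positivity
      have key := (((((((Tlog_step e1 c1 m y (ne_of_gt hy1)).add
        (Tlog_step e2 c2 m y (ne_of_gt hy2))).add
        (Tlog_step e3 c3 m y (ne_of_gt hy3))).add
        (Tlog_step e4 c4 m y (ne_of_gt hy4))).sub
        (Tlog_step 1 0 m y h5)).const_mul (-(1/12) : ℝ)).add_const (if m = 0 then K1 else 0))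
      refine key.congr_deriv ?_
      simp
  have dg : ∀ g : ℕ, 2 ≤ g → ∀ m, ∀ y ∈ S, iteratedDeriv m (G g) y
      = Cg g * (Tpow (2-2*(g:ℤ)) e1 c1 m y + Tpow (2-2*(g:ℤ)) e2 c2 m y
          + Tpow (2-2*(g:ℤ)) e3 c3 m y + Tpow (2-2*(g:ℤ)) e4 c4 m y
          - Tpow (2-2*(g:ℤ)) 2 0 m y) + (if m = 0 then Kg g else 0) := by
    intro g hg
    refine iter_on_open hSopen (G g)
      (fun m y => Cg g * (Tpow (2-2*(g:ℤ)) e1 c1 m y + Tpow (2-2*(g:ℤ)) e2 c2 m y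
          + Tpow (2-2*(g:ℤ)) e3 c3 m y + Tpow (2-2*(g:ℤ)) e4 c4 m y
          - Tpow (2-2*(g:ℤ)) 2 0 m y) + (if m = 0 then Kg g else 0)) ?_ ?_
    · rintro y ⟨hy0, hy1, hy2, hy3, hy4⟩
      rw [hGg g hg y hy0 hy1 hy2 hy3 hy4]
      simp only [Tpow, if_pos rfl, range_zero, prod_empty, pow_zero, one_mul,
        Nat.cast_zero, sub_zero, add_zero, Nat.cast_ofNat, mul_zero]
      norm_num
    · rintro m y ⟨hy0, hy1, hy2, hy3, hy4⟩
      have h5 : 2*y+0 ≠ 0 := by positivity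
      have key := (((((((Tpow_step (2-2*(g:ℤ)) e1 c1 m y (ne_of_gt hy1)).add
        (Tpow_step (2-2*(g:ℤ)) e2 c2 m y (ne_of_gt hy2))).add
        (Tpow_step (2-2*(g:ℤ)) e3 c3 m y (ne_of_gt hy3))).add
        (Tpow_step (2-2*(g:ℤ)) e4 c4 m y (ne_of_gt hy4))).sub
        (Tpow_step (2-2*(g:ℤ)) 2 0 m y h5)).const_mul (Cg g)).add_const
          (if m = 0 then Kg g else 0))
      refine key.congr_deriv ?_
      simp
  by_cases hn1 : n = 1
  · subst hn1
    rw [if_pos rfl]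
    rw [show Finset.Icc 1 1 = {1} from Finset.Icc_self 1, Finset.sum_singleton]
    have h2 : iteratedDeriv 2 (G 0) x
        = TL e1 c1 2 x + TL e2 c2 2 x + TL e3 c3 2 x + TL e4 c4 2 x - TL 2 0 2 x := by
      have := d0 2 x hx
      simpa using this
    have hTL2 : ∀ e c : ℝ, TL e c 2 x = e^2 * (Real.log (e*x+c) + 3/2) := fun e c => rfl
    rw [show 2*1 = 2 by norm_num] at *
    rw [show (1:ℕ) - 1 = 0 from rfl, h2, hTL2, hTL2, hTL2, hTL2, hTL2, he1, he2, he3, he4]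
    have hlog : Real.log ((e1*x+c1)*(e2*x+c2)*(e3*x+c3)*(e4*x+c4))
        = Real.log (e1*x+c1) + Real.log (e2*x+c2) + Real.log (e3*x+c3) + Real.log (e4*x+c4) := by
      rw [Real.log_mul (by positivity) (by positivity), Real.log_mul (by positivity) (by positivity),
        Real.log_mul (by positivity) (by positivity)]
    rw [hlog]
    rw [show (2:ℝ)*x+0 = 2*x by ring]
    norm_num [Nat.factorial]
    ring
  · rw [if_neg hn1]
    have hn2 : 2 ≤ n := by omega
    have hfacn : ((2*n).factorial : ℚ) ≠ 0 := Nat.cast_ne_zero.mpr (Nat.factorial_ne_zero _)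
    obtain ⟨M, hM⟩ : ∃ M, 2*n = M + 3 := ⟨2*n-3, by omega⟩
    have hModd : Odd M := ⟨n-2, by omega⟩
    have hM3 : 2*n-3 = M := by omega
    have hfac4 : ((2*n).factorial : ℚ)
        = (2*(n:ℚ)) * (2*(n:ℚ)-1) * (2*(n:ℚ)-2) * ((2*n-3).factorial : ℚ) := by
      rw [hM3, hM]
      have e1 : (M+3).factorial = (M+3) * ((M+2) * ((M+1) * M.factorial)) := by
        simp [Nat.factorial_succ]
      rw [e1]
      have e2 : (2:ℚ)*(n:ℚ) = (M:ℚ)+3 := by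
        have : ((2*n : ℕ):ℚ) = ((M+3 : ℕ):ℚ) := by exact_mod_cast hM
        push_cast at this
        linarith
      push_cast
      rw [e2]
      ring
    set p : ℤ := 2 - 2*(n:ℤ) with hp
    set W : ℝ := (e1*x+c1)^p + (e2*x+c2)^p + (e3*x+c3)^p + (e4*x+c4)^p with hW
    set cst : ℚ := 2 * ((2*n-3).factorial : ℚ) / ((2*n).factorial : ℚ) with hcst
    set q1 : ℕ → ℚ := fun k => cst * (((2*n).choose (2*k) : ℚ) * ((((2*(n-k)):ℕ):ℚ) - 1)
      * bernoulli (2*(n-k))) with hq1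
    set q2 : ℕ → ℚ := fun k => (-(2:ℚ)^p * cst) * (((2*n).choose (2*k) : ℚ)
      * ((((2*(n-k)):ℕ):ℚ) - 1) * bernoulli (2*(n-k)) * 4^k) with hq2
    have key : ∀ k ∈ Icc 1 n, 2 / ((2*k).factorial : ℝ) * iteratedDeriv (2*k) (G (n-k)) x
        = (q1 k : ℝ) * W + (q2 k : ℝ) * x^p := by
      intro k hk
      rw [Finset.mem_Icc] at hk
      obtain ⟨hk1, hkn⟩ := hk
      by_cases hkeq : k = n
      · -- genus 0 term
        subst hkeq
        rw [Nat.sub_self]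
        have hd := d0 (2*k) x hx
        have hTLe : ∀ e c : ℝ, e^2 = 1 → TL e c (2*k) x
            = -1 * (M.factorial : ℝ) * (e*x+c)^p := by
          intro e c he
          rw [show 2*k = M + 3 from hM]
          show e^(M+3) * (-1:ℝ)^M * (M.factorial : ℝ) * (e*x+c)^(-(M+1:ℕ):ℤ) = _
          rw [hModd.neg_one_pow, show (-(M+1:ℕ):ℤ) = p by rw [hp]; omega,
            show M+3 = 2*k from hM.symm, pow_mul, he, one_pow]
          ring
        have hTself : TL 2 0 (2*k) x = -1 * (M.factorial : ℝ) * ((2:ℝ)^(2*k) * ((2:ℝ)^p * x^p)) := by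
          rw [show 2*k = M + 3 from hM]
          show (2:ℝ)^(M+3) * (-1:ℝ)^M * (M.factorial : ℝ) * (2*x+0)^(-(M+1:ℕ):ℤ) = _
          rw [hModd.neg_one_pow, show (-(M+1:ℕ):ℤ) = p by rw [hp]; omega,
            show M+3 = 2*k from hM.symm, show (2:ℝ)*x+0 = 2*x by ring, mul_zpow]
          ring
        rw [hd, hTLe e1 c1 he1, hTLe e2 c2 he2, hTLe e3 c3 he3, hTLe e4 c4 he4, hTself,
          if_neg (by omega)]
        have h2k : (2:ℝ)^(2*k) * (2:ℝ)^p = 4 := by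
          rw [hp, show ((2:ℝ)^(2*k) : ℝ) = (2:ℝ)^((2*k : ℕ) : ℤ) from (zpow_natCast 2 (2*k)).symm,
            ← zpow_add₀ (two_ne_zero)]
          rw [show ((2*k:ℕ):ℤ) + (2 - 2*(k:ℤ)) = 2 by omega]
          norm_num
        have hq1v : (q1 k : ℝ) = -(2 * ((2*k-3).factorial : ℝ) / ((2*k).factorial : ℝ)) := by
          rw [hq1]
          simp only [Nat.sub_self, Nat.choose_self, Nat.mul_zero, bernoulli_zero, hcst]
          push_cast
          ring
        have hq2v : (q2 k : ℝ)
            = (2:ℝ)^p * (4:ℝ)^k * (2 * ((2*k-3).factorial : ℝ) / ((2*k).factorial : ℝ)) := by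
          rw [hq2]
          simp only [Nat.sub_self, Nat.choose_self, Nat.mul_zero, bernoulli_zero, hcst]
          push_cast
          ring
        rw [hq1v, hq2v, hM3, show (4:ℝ)^k = (2:ℝ)^(2*k) by rw [pow_mul]; norm_num]
        have hfr : ((2*k).factorial : ℝ) ≠ 0 :=
          Nat.cast_ne_zero.mpr (Nat.factorial_ne_zero _)
        rw [hW]
        field_simp
        ring
      · by_cases hkeq1 : k = n - 1
        · -- genus 1 term
          rw [show n - k = 1 by omega]
          have hd := d1 (2*k) x hx
          obtain ⟨J, hJ⟩ : ∃ J, 2*k = J + 1 := ⟨2*k-1, by omega⟩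
          have hJodd : Odd J := ⟨k-1, by omega⟩
          have hJM : J = 2*n - 3 := by omega
          have hTe : ∀ e c : ℝ, e^2 = 1 → Tlog e c (2*k) x
              = -(J.factorial : ℝ) * (e*x+c)^p := by
            intro e c he
            rw [hJ]
            show (-1:ℝ)^J * (J.factorial : ℝ) * e^(J+1) * (e*x+c)^(-(J+1:ℕ):ℤ) = _
            rw [hJodd.neg_one_pow, show (-(J+1:ℕ):ℤ) = p by rw [hp]; omega,
              show J+1 = 2*k by omega, pow_mul, he, one_pow]
            ring
          have hTself : Tlog 1 0 (2*k) x = -(J.factorial : ℝ) * x^p := by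
            have := hTe 1 0 (by norm_num)
            rw [this, show (1:ℝ)*x+0 = x by ring]
          rw [hd, hTe e1 c1 he1, hTe e2 c2 he2, hTe e3 c3 he3, hTe e4 c4 he4, hTself,
            if_neg (by omega)]
          -- coefficients
          have hch := Nat.choose_mul_factorial_mul_factorial (show 2*k ≤ 2*n by omega)
          rw [show 2*n - 2*k = 2 by omega] at hch
          have hchq : (((2*n).choose (2*k) : ℚ)) * ((2*k).factorial : ℚ) * 2
              = ((2*n).factorial : ℚ) := by
            exact_mod_cast hch
          have hb2 : bernoulli 2 = 1/6 := by
            rw [bernoulli_eq_bernoulli'_of_ne_one (by norm_num), bernoulli'_two]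
          have hq1v : (q1 k : ℚ) = ((2*k-1).factorial : ℚ) / (6 * ((2*k).factorial : ℚ)) := by
            simp only [hq1, hcst, show n - k = 1 by omega]
            norm_num [hb2]
            rw [show (2*n-3 : ℕ) = 2*k-1 by omega]
            have hck : ((2*k).factorial : ℚ) ≠ 0 := Nat.cast_ne_zero.mpr (Nat.factorial_ne_zero _)
            have hC : (((2*n).choose (2*k) : ℚ)) ≠ 0 := by
              exact Nat.cast_ne_zero.mpr (Nat.choose_pos (by omega : 2*k ≤ 2*n)).ne'
            field_simp
            linear_combination hchq
          have hq2v : (q2 k : ℚ) = -(q1 k) := by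
            simp only [hq2, hq1]
            have h1 : (2:ℚ)^p * 4^k = 1 := by
              rw [hp, show ((4:ℚ)^k : ℚ) = (2:ℚ)^((2*k : ℕ) : ℤ) by
                rw [zpow_natCast, pow_mul]; norm_num,
                ← zpow_add₀ (two_ne_zero)]
              rw [show (2 - 2*(n:ℤ)) + ((2*k:ℕ):ℤ) = 0 by omega]
              norm_num
            calc (-(2:ℚ)^p * cst) * (((2*n).choose (2*k) : ℚ)
                  * ((((2*(n-k)):ℕ):ℚ) - 1) * bernoulli (2*(n-k)) * 4^k)
                = -((2:ℚ)^p * 4^k) * (cst * (((2*n).choose (2*k) : ℚ)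
                  * ((((2*(n-k)):ℕ):ℚ) - 1) * bernoulli (2*(n-k)))) := by ring
              _ = _ := by rw [h1]; ring
          have hJfac : (J.factorial : ℝ) = ((2*k-1).factorial : ℝ) := by
            rw [show 2*k-1 = J by omega]
          have hq1r : (q1 k : ℝ) = ((2*k-1).factorial : ℝ) / (6 * ((2*k).factorial : ℝ)) := by
            rw [hq1v]; push_cast; ring
          have hq2r : (q2 k : ℝ) = -((q1 k : ℚ) : ℝ) := by exact_mod_cast congrArg (fun q : ℚ => (q:ℝ)) hq2v
          rw [hq2r, hq1r, hJfac]
          have hck : ((2*k).factorial : ℝ) ≠ 0 := Nat.cast_ne_zero.mpr (Nat.factorial_ne_zero _)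
          rw [hW]
          field_simp
          ring
        · -- genus ≥ 2 term
          set g : ℕ := n - k with hgdef
          have hg2 : 2 ≤ g := by omega
          have hd := dg g hg2 (2*k) x hx
          have hg3 : 3 ≤ 2*g := by omega
          -- the falling-factorial product
          have hc1 : ((2 - 2*(g:ℤ) : ℤ) : ℝ) = -((2*g-3 : ℕ):ℝ) - 1 := by
            rw [Nat.cast_sub hg3]
            push_cast
            ring
          have hprod : ∏ i ∈ range (2*k), (((2 - 2*(g:ℤ) : ℤ) : ℝ) - (i:ℝ))
              = ((2*n-3).factorial : ℝ) / ((2*g-3).factorial : ℝ) := by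
            simp only [hc1]
            have := prod_cast_fac (2*g-3) (2*k)
            rw [this, show 2*g-3 + 2*k = 2*n-3 by omega, pow_mul]
            norm_num
          have hTe : ∀ e c : ℝ, e^2 = 1 → Tpow (2-2*(g:ℤ)) e c (2*k) x
              = ((2*n-3).factorial : ℝ) / ((2*g-3).factorial : ℝ) * (e*x+c)^p := by
            intro e c he
            simp only [Tpow]
            rw [hprod, pow_mul, he, one_pow, mul_one,
              show (2-2*(g:ℤ)) - ((2*k:ℕ):ℤ) = p by rw [hp]; omega]
          have hTself : Tpow (2-2*(g:ℤ)) 2 0 (2*k) x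
              = ((2*n-3).factorial : ℝ) / ((2*g-3).factorial : ℝ) * (2:ℝ)^(2*k)
                * ((2:ℝ)^p * x^p) := by
            simp only [Tpow]
            rw [hprod, show (2:ℝ)*x+0 = 2*x by ring,
              show (2-2*(g:ℤ)) - ((2*k:ℕ):ℤ) = p by rw [hp]; omega, mul_zpow]
          rw [hd, hTe e1 c1 he1, hTe e2 c2 he2, hTe e3 c3 he3, hTe e4 c4 he4, hTself,
            if_neg (by omega)]
          -- coefficient identities
          have hch := Nat.choose_mul_factorial_mul_factorial (show 2*k ≤ 2*n by omega)
          rw [show 2*n - 2*k = 2*g by omega] at hch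
          have hchq : (((2*n).choose (2*k) : ℚ)) * ((2*k).factorial : ℚ) * ((2*g).factorial : ℚ)
              = ((2*n).factorial : ℚ) := by
            exact_mod_cast hch
          have hgfac : ((2*g).factorial : ℚ)
              = (2*(g:ℚ)) * (2*(g:ℚ)-1) * (2*(g:ℚ)-2) * ((2*g-3).factorial : ℚ) := by
            obtain ⟨Mg, hMg⟩ : ∃ Mg, 2*g = Mg + 3 := ⟨2*g-3, by omega⟩
            rw [show 2*g-3 = Mg by omega, hMg]
            have e1 : (Mg+3).factorial = (Mg+3) * ((Mg+2) * ((Mg+1) * Mg.factorial)) := by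
              simp [Nat.factorial_succ]
            rw [e1]
            have e2 : (2:ℚ)*(g:ℚ) = (Mg:ℚ)+3 := by
              have : ((2*g : ℕ):ℚ) = ((Mg+3 : ℕ):ℚ) := by exact_mod_cast hMg
              push_cast at this
              linarith
            push_cast
            rw [e2]
            ring
          have hq1q : (q1 k : ℚ) = 2 / ((2*k).factorial : ℚ)
              * ((bernoulli (2*g)) / (2*(g:ℚ)*(2*(g:ℚ)-2)))
              * (((2*n-3).factorial : ℚ) / ((2*g-3).factorial : ℚ)) := by
            simp only [hq1, hcst, ← hgdef]
            have hC : (((2*n).choose (2*k) : ℚ)) ≠ 0 :=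
              Nat.cast_ne_zero.mpr (Nat.choose_pos (by omega : 2*k ≤ 2*n)).ne'
            have hck : ((2*k).factorial : ℚ) ≠ 0 := Nat.cast_ne_zero.mpr (Nat.factorial_ne_zero _)
            have hg3q : ((2*g-3).factorial : ℚ) ≠ 0 := Nat.cast_ne_zero.mpr (Nat.factorial_ne_zero _)
            have hgq : (2*(g:ℚ)) ≠ 0 := by
              have : (2:ℚ) ≤ (g:ℚ) := by exact_mod_cast hg2
              positivity
            have hgq2 : (2*(g:ℚ)-2) ≠ 0 := by
              have : (2:ℚ) ≤ (g:ℚ) := by exact_mod_cast hg2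
              intro hcon
              linarith
            have hgq1 : (2*(g:ℚ)-1) ≠ 0 := by
              have : (2:ℚ) ≤ (g:ℚ) := by exact_mod_cast hg2
              intro hcon
              linarith
            have h2g : ((2*g : ℕ):ℚ) = 2*(g:ℚ) := by push_cast; ring
            rw [← hchq, hgfac, h2g]
            field_simp
          have hCgr := Cg_def g
          have hq1r : (q1 k : ℝ) = 2 / ((2*k).factorial : ℝ)
              * (Cg g * (((2*n-3).factorial : ℝ) / ((2*g-3).factorial : ℝ))) := by
            have hcast := congrArg (fun q : ℚ => (q : ℝ)) hq1q
            push_cast at hcast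
            rw [hCgr, hcast]
            push_cast
            ring
          have hq2r : (q2 k : ℝ) = -((2:ℝ)^p * (4:ℝ)^k * (q1 k : ℝ)) := by
            have hqq : q2 k = -((2:ℚ)^p * 4^k * q1 k) := by
              simp only [hq1, hq2]; ring
            have hcast := congrArg (fun q : ℚ => (q : ℝ)) hqq
            push_cast at hcast
            exact hcast
          rw [hq2r, hq1r]
          have h4k : (4:ℝ)^k = (2:ℝ)^(2*k) := by
            rw [pow_mul]; norm_num
          rw [h4k]
          ring
    rw [Finset.sum_congr rfl key, Finset.sum_add_distrib, ← Finset.sum_mul, ← Finset.sum_mul]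
    have hs1 : (∑ k ∈ Icc 1 n, (q1 k : ℝ)) = 0 := by
      have hq : ∑ k ∈ Icc 1 n, q1 k = 0 := by
        simp only [hq1]
        rw [← Finset.mul_sum, Q1 n hn2]
        norm_num
      rw [← Rat.cast_sum]
      exact_mod_cast hq
    have hs2 : (∑ k ∈ Icc 1 n, (q2 k : ℝ)) = (2:ℝ)^p / ((n:ℝ)-1) := by
      have hq : ∑ k ∈ Icc 1 n, q2 k = (2:ℚ)^p / ((n:ℚ)-1) := by
        simp only [hq2]
        rw [← Finset.mul_sum, Q2 n hn2]
        have hne : ((n:ℚ)-1) ≠ 0 := by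
          have : (2:ℚ) ≤ (n:ℚ) := by exact_mod_cast hn2
          intro hcon
          linarith
        rw [hcst, hfac4]
        have hf3 : ((2*n-3).factorial : ℚ) ≠ 0 := Nat.cast_ne_zero.mpr (Nat.factorial_ne_zero _)
        have hn0 : (2*(n:ℚ)) ≠ 0 := by
          have : (2:ℚ) ≤ (n:ℚ) := by exact_mod_cast hn2
          positivity
        have hn1' : (2*(n:ℚ)-1) ≠ 0 := by
          have : (2:ℚ) ≤ (n:ℚ) := by exact_mod_cast hn2
          intro hcon; linarith
        have hn2' : (2*(n:ℚ)-2) ≠ 0 := by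
          have : (2:ℚ) ≤ (n:ℚ) := by exact_mod_cast hn2
          intro hcon; linarith
        have h2n : ((2*n : ℕ):ℚ) = 2*(n:ℚ) := by push_cast; ring
        rw [h2n]
        field_simp
      rw [← Rat.cast_sum]
      rw [congrArg (fun q : ℚ => (q : ℝ)) hq]
      push_cast
      ring
    rw [hs1, hs2, mul_zpow]
    ring

/-- (Gauss curve) The free energy `F = Σ_{g≥0} ℏ^{2g−2} F_g(λ₀,λ₁,λ∞)` of the
Gauss spectral curve satisfies the three-term difference equation
`X_j F = log Λ − 2log(2λ_j) − log(2λ_j+ℏ) − log(2λ_j−ℏ)` for each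
`j ∈ {0,1,∞}`, order by order in `ℏ`, where
`Λ = Π_{ε,η∈{±1}}(λ₀+ελ₁+ηλ∞)`. -/
theorem stmt18 (F : ℕ → ℝ → ℝ → ℝ → ℝ)
    (hF0 : ∀ a b c : ℝ, 0 < a → 0 < b → 0 < c →
      0 < a + b + c → 0 < a + b - c → 0 < a - b + c → 0 < a - b - c →
      F 0 a b c =
        (a + b + c) ^ 2 / 2 * Real.log (a + b + c)
        + (a + b - c) ^ 2 / 2 * Real.log (a + b - c)
        + (a - b + c) ^ 2 / 2 * Real.log (a - b + c)
        + (a - b - c) ^ 2 / 2 * Real.log (a - b - c)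
        - 2 * a ^ 2 * Real.log (2 * a) - 2 * b ^ 2 * Real.log (2 * b)
        - 2 * c ^ 2 * Real.log (2 * c))
    (hF1 : ∀ a b c : ℝ, 0 < a → 0 < b → 0 < c →
      0 < a + b + c → 0 < a + b - c → 0 < a - b + c → 0 < a - b - c →
      F 1 a b c = -(1 / 12) * Real.log
        ((a + b + c) * (a + b - c) * (a - b + c) * (a - b - c) / (a * b * c)))
    (hFg : ∀ g : ℕ, 2 ≤ g → ∀ a b c : ℝ, 0 < a → 0 < b → 0 < c →
      0 < a + b + c → 0 < a + b - c → 0 < a - b + c → 0 < a - b - c →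
      F g a b c = (bernoulli (2 * g) : ℝ) / (2 * (g : ℝ) * (2 * (g : ℝ) - 2))
        * ((a + b + c) ^ (2 - 2 * (g : ℤ)) + (a + b - c) ^ (2 - 2 * (g : ℤ))
           + (a - b + c) ^ (2 - 2 * (g : ℤ)) + (a - b - c) ^ (2 - 2 * (g : ℤ))
           - (2 * a) ^ (2 - 2 * (g : ℤ)) - (2 * b) ^ (2 - 2 * (g : ℤ))
           - (2 * c) ^ (2 - 2 * (g : ℤ))))
    (n : ℕ) (hn : 1 ≤ n) (a b c : ℝ) (ha : 0 < a) (hb : 0 < b) (hc : 0 < c)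
    (h1 : 0 < a + b + c) (h2 : 0 < a + b - c) (h3 : 0 < a - b + c)
    (h4 : 0 < a - b - c) :
    (∑ k ∈ Finset.Icc 1 n, 2 / (Nat.factorial (2 * k) : ℝ)
          * iteratedDeriv (2 * k) (fun y => F (n - k) y b c) a
        = if n = 1 then
            Real.log ((a + b + c) * (a + b - c) * (a - b + c) * (a - b - c))
              - 4 * Real.log (2 * a)
          else 1 / ((n : ℝ) - 1) * (2 * a) ^ (2 - 2 * (n : ℤ)))
    ∧ (∑ k ∈ Finset.Icc 1 n, 2 / (Nat.factorial (2 * k) : ℝ)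
          * iteratedDeriv (2 * k) (fun y => F (n - k) a y c) b
        = if n = 1 then
            Real.log ((a + b + c) * (a + b - c) * (a - b + c) * (a - b - c))
              - 4 * Real.log (2 * b)
          else 1 / ((n : ℝ) - 1) * (2 * b) ^ (2 - 2 * (n : ℤ)))
    ∧ (∑ k ∈ Finset.Icc 1 n, 2 / (Nat.factorial (2 * k) : ℝ)
          * iteratedDeriv (2 * k) (fun y => F (n - k) a b y) c
        = if n = 1 then
            Real.log ((a + b + c) * (a + b - c) * (a - b + c) * (a - b - c))
              - 4 * Real.log (2 * c)
          else 1 / ((n : ℝ) - 1) * (2 * c) ^ (2 - 2 * (n : ℤ))) := by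
  refine ⟨?_, ?_, ?_⟩
  · -- variable a
    have Ha := master (fun g y => F g y b c) 1 (b+c) 1 (b-c) 1 (-b+c) 1 (-b-c)
      (by norm_num) (by norm_num) (by norm_num) (by norm_num) n hn a
      ha (by linarith) (by linarith) (by linarith) (by linarith)
      (- 2 * b ^ 2 * Real.log (2 * b) - 2 * c ^ 2 * Real.log (2 * c))
      ((1/12) * (Real.log b + Real.log c))
      (fun g => Cg g * (-(2*b)^(2-2*(g:ℤ)) - (2*c)^(2-2*(g:ℤ))))
      (by
        intro y hy hy1 hy2 hy3 hy4
        rw [hF0 y b c hy hb hc (by linarith) (by linarith) (by linarith) (by linarith)]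
        rw [show (1:ℝ)*y+(b+c) = y+b+c by ring, show (1:ℝ)*y+(b-c) = y+b-c by ring,
          show (1:ℝ)*y+(-b+c) = y-b+c by ring, show (1:ℝ)*y+(-b-c) = y-b-c by ring]
        ring)
      (by
        intro y hy hy1 hy2 hy3 hy4
        rw [hF1 y b c hy hb hc (by linarith) (by linarith) (by linarith) (by linarith)]
        rw [show (1:ℝ)*y+(b+c) = y+b+c by ring, show (1:ℝ)*y+(b-c) = y+b-c by ring,
          show (1:ℝ)*y+(-b+c) = y-b+c by ring, show (1:ℝ)*y+(-b-c) = y-b-c by ring]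
        have p1 : (0:ℝ) < y+b+c := by linarith
        have p2 : (0:ℝ) < y+b-c := by linarith
        have p3 : (0:ℝ) < y-b+c := by linarith
        have p4 : (0:ℝ) < y-b-c := by linarith
        rw [Real.log_div (ne_of_gt (mul_pos (mul_pos (mul_pos p1 p2) p3) p4))
            (ne_of_gt (mul_pos (mul_pos hy hb) hc)),
          Real.log_mul (ne_of_gt (mul_pos (mul_pos p1 p2) p3)) (ne_of_gt p4),
          Real.log_mul (ne_of_gt (mul_pos p1 p2)) (ne_of_gt p3),
          Real.log_mul (ne_of_gt p1) (ne_of_gt p2),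
          Real.log_mul (ne_of_gt (mul_pos hy hb)) (ne_of_gt hc),
          Real.log_mul (ne_of_gt hy) (ne_of_gt hb)]
        ring)
      (by
        intro g hg y hy hy1 hy2 hy3 hy4
        rw [hFg g hg y b c hy hb hc (by linarith) (by linarith) (by linarith) (by linarith)]
        rw [Cg_def]
        rw [show (1:ℝ)*y+(b+c) = y+b+c by ring, show (1:ℝ)*y+(b-c) = y+b-c by ring,
          show (1:ℝ)*y+(-b+c) = y-b+c by ring, show (1:ℝ)*y+(-b-c) = y-b-c by ring]
        ring)
    rw [show (1:ℝ)*a+(b+c) = a+b+c by ring, show (1:ℝ)*a+(b-c) = a+b-c by ring,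
      show (1:ℝ)*a+(-b+c) = a-b+c by ring, show (1:ℝ)*a+(-b-c) = a-b-c by ring] at Ha
    exact Ha
  · -- variable b
    have Hb := master (fun g y => F g a y c) 1 (a+c) 1 (a-c) (-1) (a+c) (-1) (a-c)
      (by norm_num) (by norm_num) (by norm_num) (by norm_num) n hn b
      hb (by linarith) (by linarith) (by linarith) (by linarith)
      (- 2 * a ^ 2 * Real.log (2 * a) - 2 * c ^ 2 * Real.log (2 * c))
      ((1/12) * (Real.log a + Real.log c))
      (fun g => Cg g * (-(2*a)^(2-2*(g:ℤ)) - (2*c)^(2-2*(g:ℤ))))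
      (by
        intro y hy hy1 hy2 hy3 hy4
        rw [hF0 a y c ha hy hc (by linarith) (by linarith) (by linarith) (by linarith)]
        rw [show (1:ℝ)*y+(a+c) = a+y+c by ring, show (1:ℝ)*y+(a-c) = a+y-c by ring,
          show (-1:ℝ)*y+(a+c) = a-y+c by ring, show (-1:ℝ)*y+(a-c) = a-y-c by ring]
        ring)
      (by
        intro y hy hy1 hy2 hy3 hy4
        rw [hF1 a y c ha hy hc (by linarith) (by linarith) (by linarith) (by linarith)]
        rw [show (1:ℝ)*y+(a+c) = a+y+c by ring, show (1:ℝ)*y+(a-c) = a+y-c by ring,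
          show (-1:ℝ)*y+(a+c) = a-y+c by ring, show (-1:ℝ)*y+(a-c) = a-y-c by ring]
        have p1 : (0:ℝ) < a+y+c := by linarith
        have p2 : (0:ℝ) < a+y-c := by linarith
        have p3 : (0:ℝ) < a-y+c := by linarith
        have p4 : (0:ℝ) < a-y-c := by linarith
        rw [Real.log_div (ne_of_gt (mul_pos (mul_pos (mul_pos p1 p2) p3) p4))
            (ne_of_gt (mul_pos (mul_pos ha hy) hc)),
          Real.log_mul (ne_of_gt (mul_pos (mul_pos p1 p2) p3)) (ne_of_gt p4),
          Real.log_mul (ne_of_gt (mul_pos p1 p2)) (ne_of_gt p3),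
          Real.log_mul (ne_of_gt p1) (ne_of_gt p2),
          Real.log_mul (ne_of_gt (mul_pos ha hy)) (ne_of_gt hc),
          Real.log_mul (ne_of_gt ha) (ne_of_gt hy)]
        ring)
      (by
        intro g hg y hy hy1 hy2 hy3 hy4
        rw [hFg g hg a y c ha hy hc (by linarith) (by linarith) (by linarith) (by linarith)]
        rw [Cg_def]
        rw [show (1:ℝ)*y+(a+c) = a+y+c by ring, show (1:ℝ)*y+(a-c) = a+y-c by ring,
          show (-1:ℝ)*y+(a+c) = a-y+c by ring, show (-1:ℝ)*y+(a-c) = a-y-c by ring]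
        ring)
    rw [show (1:ℝ)*b+(a+c) = a+b+c by ring, show (1:ℝ)*b+(a-c) = a+b-c by ring,
      show (-1:ℝ)*b+(a+c) = a-b+c by ring, show (-1:ℝ)*b+(a-c) = a-b-c by ring] at Hb
    exact Hb
  · -- variable c
    have Hc := master (fun g y => F g a b y) 1 (a+b) (-1) (a+b) 1 (a-b) (-1) (a-b)
      (by norm_num) (by norm_num) (by norm_num) (by norm_num) n hn c
      hc (by linarith) (by linarith) (by linarith) (by linarith)
      (- 2 * a ^ 2 * Real.log (2 * a) - 2 * b ^ 2 * Real.log (2 * b))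
      ((1/12) * (Real.log a + Real.log b))
      (fun g => Cg g * (-(2*a)^(2-2*(g:ℤ)) - (2*b)^(2-2*(g:ℤ))))
      (by
        intro y hy hy1 hy2 hy3 hy4
        rw [hF0 a b y ha hb hy (by linarith) (by linarith) (by linarith) (by linarith)]
        rw [show (1:ℝ)*y+(a+b) = a+b+y by ring, show (-1:ℝ)*y+(a+b) = a+b-y by ring,
          show (1:ℝ)*y+(a-b) = a-b+y by ring, show (-1:ℝ)*y+(a-b) = a-b-y by ring]
        ring)
      (by
        intro y hy hy1 hy2 hy3 hy4
        rw [hF1 a b y ha hb hy (by linarith) (by linarith) (by linarith) (by linarith)]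
        rw [show (1:ℝ)*y+(a+b) = a+b+y by ring, show (-1:ℝ)*y+(a+b) = a+b-y by ring,
          show (1:ℝ)*y+(a-b) = a-b+y by ring, show (-1:ℝ)*y+(a-b) = a-b-y by ring]
        have p1 : (0:ℝ) < a+b+y := by linarith
        have p2 : (0:ℝ) < a+b-y := by linarith
        have p3 : (0:ℝ) < a-b+y := by linarith
        have p4 : (0:ℝ) < a-b-y := by linarith
        rw [Real.log_div (ne_of_gt (mul_pos (mul_pos (mul_pos p1 p2) p3) p4))
            (ne_of_gt (mul_pos (mul_pos ha hb) hy)),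
          Real.log_mul (ne_of_gt (mul_pos (mul_pos p1 p2) p3)) (ne_of_gt p4),
          Real.log_mul (ne_of_gt (mul_pos p1 p2)) (ne_of_gt p3),
          Real.log_mul (ne_of_gt p1) (ne_of_gt p2),
          Real.log_mul (ne_of_gt (mul_pos ha hb)) (ne_of_gt hy),
          Real.log_mul (ne_of_gt ha) (ne_of_gt hb)]
        ring)
      (by
        intro g hg y hy hy1 hy2 hy3 hy4
        rw [hFg g hg a b y ha hb hy (by linarith) (by linarith) (by linarith) (by linarith)]
        rw [Cg_def]
        rw [show (1:ℝ)*y+(a+b) = a+b+y by ring, show (-1:ℝ)*y+(a+b) = a+b-y by ring,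
          show (1:ℝ)*y+(a-b) = a-b+y by ring, show (-1:ℝ)*y+(a-b) = a-b-y by ring]
        ring)
    rw [show (1:ℝ)*c+(a+b) = a+b+c by ring, show (-1:ℝ)*c+(a+b) = a+b-c by ring,
      show (1:ℝ)*c+(a-b) = a-b+c by ring, show (-1:ℝ)*c+(a-b) = a-b-c by ring] at Hc
    exact Hc
end
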